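/- arXiv:1108.5065 — 5 statements merged into one kernel-verified Lean document; each statement's English description precedes it below -/
import Mathlib

section
/- Let {K^i}_{i=1}^k satisfy ∑ᵢ K^{i†}K^i = I and let ρ be a density matrix with p_i = Tr(K^i ρ K^{i†}) and ρ_i = K^i ρ K^{i†}/p_i. Then the average output entropy is bounded by the entropy of the input: ∑ᵢ pᵢ S(ρᵢ) ≤ S(ρ). -/
open Matrix Polynomial
open scoped ComplexOrder Kronecker

set_option maxHeartbeats 2000000
set_option synthInstance.maxHeartbeats 200000
set_option linter.unusedSectionVars false

namespace VN

variable {n : Type*} [Fintype n] [DecidableEq n] {m : Type*} [Fintype m] [DecidableEq m]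

lemma charmatrix_eq (A : Matrix n n ℂ) :
    charmatrix A = (X : ℂ[X]) • (1 : Matrix n n ℂ[X]) - A.map Polynomial.C := by
  ext i j
  by_cases h : i = j <;> simp [h, charmatrix_apply, Matrix.diagonal_apply, Matrix.one_apply]

lemma charpoly_unitary_conj (U A : Matrix n n ℂ) (hU : U ∈ Matrix.unitaryGroup n ℂ) :
    (U * A * star U).charpoly = A.charpoly := by
  have h1 : U * star U = 1 := (Matrix.mem_unitaryGroup_iff).mp hU
  have hmap : (U * A * star U).map Polynomial.C
      = U.map Polynomial.C * A.map Polynomial.C * (star U).map Polynomial.C := by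
    simp [Matrix.map_mul]
  have hcm : charmatrix (U * A * star U)
      = U.map Polynomial.C * charmatrix A * (star U).map Polynomial.C := by
    rw [charmatrix_eq, charmatrix_eq, hmap, Matrix.mul_sub, Matrix.sub_mul]
    congr 1
    rw [Matrix.mul_smul, Matrix.smul_mul, mul_one, ← Matrix.map_mul, h1, Matrix.map_one _ (by simp) (by simp)]
  have hdet1 : (U.map Polynomial.C).det * ((star U).map Polynomial.C).det = 1 := by
    rw [← Matrix.det_mul, ← Matrix.map_mul, h1, Matrix.map_one _ (by simp) (by simp), Matrix.det_one]
  rw [Matrix.charpoly, hcm, Matrix.det_mul, Matrix.det_mul, Matrix.charpoly]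
  ring_nf
  rw [mul_comm, ← mul_assoc, mul_comm ((star U).map Polynomial.C).det, hdet1, one_mul]

lemma charpoly_diagonal (d : n → ℂ) :
    (Matrix.diagonal d).charpoly = ∏ i, (X - Polynomial.C (d i)) := by
  have : charmatrix (Matrix.diagonal d) = Matrix.diagonal (fun i => X - Polynomial.C (d i)) := by
    ext i j
    by_cases h : i = j <;> simp [h, charmatrix_apply, Matrix.diagonal_apply]
  rw [Matrix.charpoly, this, Matrix.det_diagonal]

/-- Charpoly of a Hermitian matrix is the product of linear factors at its eigenvalues. -/
lemma charpoly_isHermitian {A : Matrix n n ℂ} (hA : A.IsHermitian) :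
    A.charpoly = ∏ i, (X - Polynomial.C (hA.eigenvalues i : ℂ)) := by
  conv_lhs => rw [hA.spectral_theorem, Unitary.conjStarAlgAut_apply]
  rw [charpoly_unitary_conj _ _ (hA.eigenvectorUnitary).2, charpoly_diagonal]
  rfl

lemma roots_charpoly_isHermitian {A : Matrix n n ℂ} (hA : A.IsHermitian) :
    A.charpoly.roots = (Finset.univ.val.map (fun i => (hA.eigenvalues i : ℂ))) := by
  rw [charpoly_isHermitian hA]
  rw [← Polynomial.roots_multiset_prod_X_sub_C (Finset.univ.val.map (fun i => (hA.eigenvalues i : ℂ)))]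
  congr 1
  rw [Multiset.map_map]
  exact (Finset.prod_eq_multiset_prod _ _).symm

lemma sum_f_eigenvalues_of_roots_eq {A : Matrix n n ℂ} {B : Matrix m m ℂ}
    (hA : A.IsHermitian) (hB : B.IsHermitian) (f : ℝ → ℝ) (hf : f 0 = 0)
    {a b : ℕ} (h : A.charpoly * X ^ a = B.charpoly * X ^ b) :
    ∑ i, f (hA.eigenvalues i) = ∑ j, f (hB.eigenvalues j) := by
  have hA0 : A.charpoly ≠ 0 := A.charpoly_monic.ne_zero
  have hB0 : B.charpoly ≠ 0 := B.charpoly_monic.ne_zero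
  have hroots : A.charpoly.roots + a • ({0} : Multiset ℂ)
      = B.charpoly.roots + b • ({0} : Multiset ℂ) := by
    have := congrArg Polynomial.roots h
    rwa [Polynomial.roots_mul (mul_ne_zero hA0 (pow_ne_zero _ X_ne_zero)),
      Polynomial.roots_mul (mul_ne_zero hB0 (pow_ne_zero _ X_ne_zero)),
      Polynomial.roots_pow, Polynomial.roots_pow, Polynomial.roots_X] at this
  set g : ℂ → ℝ := fun z => f z.re with hg
  have hsum := congrArg (fun s : Multiset ℂ => (s.map g).sum) hroots
  simp only [Multiset.map_add, Multiset.sum_add] at hsum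
  have hzero : ∀ c : ℕ, ((c • ({0} : Multiset ℂ)).map g).sum = 0 := by
    intro c
    rw [Multiset.nsmul_singleton, Multiset.map_replicate, Multiset.sum_replicate, hg]
    simp [hf]
  rw [hzero, hzero, add_zero, add_zero, roots_charpoly_isHermitian hA,
    roots_charpoly_isHermitian hB, Multiset.map_map, Multiset.map_map] at hsum
  simp only [hg, Function.comp_def, Complex.ofReal_re] at hsum
  rw [Finset.sum, Finset.sum]
  exact hsum


variable {n : Type*} [Fintype n] [DecidableEq n] {m : Type*} [Fintype m] [DecidableEq m]

lemma det_smul_one_sub_mul {K : Type*} [Field K] (x : K) (hx : x ≠ 0)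
    (P : Matrix m n K) (Q : Matrix n m K) :
    (x • (1 : Matrix m m K) - P * Q).det * x ^ Fintype.card n
      = (x • (1 : Matrix n n K) - Q * P).det * x ^ Fintype.card m := by
  have h1 : x • (1 : Matrix m m K) - P * Q = x • ((1 : Matrix m m K) - (x⁻¹ • P) * Q) := by
    rw [smul_sub, Matrix.smul_mul, smul_smul, mul_inv_cancel₀ hx, one_smul]
  have h2 : x • (1 : Matrix n n K) - Q * P = x • ((1 : Matrix n n K) - Q * (x⁻¹ • P)) := by
    rw [smul_sub, Matrix.mul_smul, smul_smul, mul_inv_cancel₀ hx, one_smul]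
  rw [h1, h2, Matrix.det_smul, Matrix.det_smul, Matrix.det_one_sub_mul_comm]
  ring

lemma map_charpoly_eq (A : Matrix m m ℂ) :
    algebraMap ℂ[X] (RatFunc ℂ) A.charpoly
      = ((algebraMap ℂ[X] (RatFunc ℂ) X) • (1 : Matrix m m (RatFunc ℂ))
          - A.map ((algebraMap ℂ[X] (RatFunc ℂ)).comp Polynomial.C)).det := by
  rw [Matrix.charpoly, RingHom.map_det]
  congr 1
  ext i j
  by_cases h : i = j <;>
    simp [h, charmatrix_apply, Matrix.diagonal_apply, Matrix.one_apply, Matrix.map_apply,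
      RingHom.mapMatrix_apply]

lemma charpoly_mul_conjTranspose_comm (M : Matrix m n ℂ) :
    (M * Mᴴ).charpoly * X ^ (Fintype.card n) = (Mᴴ * M).charpoly * X ^ (Fintype.card m) := by
  have hinj : Function.Injective (algebraMap ℂ[X] (RatFunc ℂ)) :=
    IsFractionRing.injective ℂ[X] (RatFunc ℂ)
  apply hinj
  set φ := algebraMap ℂ[X] (RatFunc ℂ)
  set ψ := φ.comp (Polynomial.C : ℂ →+* ℂ[X]) with hψ
  set x : RatFunc ℂ := φ X with hxdef
  have hx : x ≠ 0 := by
    intro h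
    exact Polynomial.X_ne_zero (hinj (by simpa using h))
  have hmm : (M * Mᴴ).map ψ = M.map ψ * (Mᴴ).map ψ := Matrix.map_mul
  have hmm' : (Mᴴ * M).map ψ = (Mᴴ).map ψ * M.map ψ := Matrix.map_mul
  rw [_root_.map_mul, _root_.map_mul, map_pow, map_pow, map_charpoly_eq, map_charpoly_eq, hmm, hmm']
  exact det_smul_one_sub_mul x hx (M.map ψ) ((Mᴴ).map ψ)


lemma sum_f_eq_roots_sum {A : Matrix n n ℂ} (hA : A.IsHermitian) (f : ℝ → ℝ) :
    ∑ i, f (hA.eigenvalues i) = (A.charpoly.roots.map (fun z => f z.re)).sum := by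
  rw [roots_charpoly_isHermitian hA, Multiset.map_map]
  simp only [Function.comp_def, Complex.ofReal_re]
  rw [Finset.sum]

lemma charpoly_blockDiagonal {o : Type*} [Fintype o] [DecidableEq o]
    (σ : o → Matrix n n ℂ) :
    (Matrix.blockDiagonal σ).charpoly = ∏ i, (σ i).charpoly := by
  have h : charmatrix (Matrix.blockDiagonal σ)
      = Matrix.blockDiagonal (fun i => charmatrix (σ i)) := by
    ext ⟨x, i⟩ ⟨y, j⟩
    by_cases hij : i = j
    · subst hij
      by_cases hxy : x = y <;>
        simp [hxy, charmatrix_apply, Matrix.blockDiagonal_apply, Matrix.diagonal_apply,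
          Prod.ext_iff]
    · simp [charmatrix_apply, Matrix.blockDiagonal_apply, Matrix.diagonal_apply,
        Prod.ext_iff, hij]
  rw [Matrix.charpoly, h, Matrix.det_blockDiagonal]
  rfl

lemma sum_f_eig_blockDiagonal {o : Type*} [Fintype o] [DecidableEq o]
    {σ : o → Matrix n n ℂ} (hσ : ∀ i, (σ i).IsHermitian)
    (hH : (Matrix.blockDiagonal σ).IsHermitian) (f : ℝ → ℝ) :
    ∑ r, f (hH.eigenvalues r) = ∑ i, ∑ l, f ((hσ i).eigenvalues l) := by
  rw [sum_f_eq_roots_sum hH, charpoly_blockDiagonal]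
  have hne : ∀ i ∈ Finset.univ, (σ i).charpoly ≠ 0 :=
    fun i _ => (σ i).charpoly_monic.ne_zero
  rw [Polynomial.roots_prod _ _ (Finset.prod_ne_zero_iff.mpr hne)]
  rw [Multiset.map_bind, Multiset.sum_bind]
  have : ∀ i, ((((σ i).charpoly).roots.map (fun z => f z.re))).sum
      = ∑ l, f ((hσ i).eigenvalues l) := fun i => (sum_f_eq_roots_sum (hσ i) f).symm
  rw [Finset.sum]
  exact Finset.sum_congr rfl (fun i _ => (this i))

lemma sum_f_of_charpoly_prod {A : Matrix n n ℂ} (hA : A.IsHermitian) {d : m → ℝ}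
    (h : A.charpoly = ∏ j, (X - Polynomial.C ((d j : ℝ) : ℂ))) (f : ℝ → ℝ) :
    ∑ i, f (hA.eigenvalues i) = ∑ j, f (d j) := by
  rw [sum_f_eq_roots_sum hA, h]
  have : (∏ j, (X - Polynomial.C ((d j : ℝ) : ℂ))).roots
      = Finset.univ.val.map (fun j => ((d j : ℝ) : ℂ)) := by
    rw [← Polynomial.roots_multiset_prod_X_sub_C (Finset.univ.val.map (fun j => ((d j : ℝ) : ℂ)))]
    congr 1
    rw [Multiset.map_map]
    exact (Finset.prod_eq_multiset_prod _ _).symm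
  rw [this, Multiset.map_map]
  simp only [Function.comp_def, Complex.ofReal_re]
  rw [Finset.sum]

lemma charpoly_real_smul {A : Matrix n n ℂ} (hA : A.IsHermitian) (c : ℝ) :
    ((c : ℂ) • A).charpoly = ∏ i, (X - Polynomial.C (((c * hA.eigenvalues i : ℝ)) : ℂ)) := by
  have h1 : (c : ℂ) • A
      = (hA.eigenvectorUnitary : Matrix n n ℂ)
        * Matrix.diagonal (fun i => ((c * hA.eigenvalues i : ℝ) : ℂ))
        * star (hA.eigenvectorUnitary : Matrix n n ℂ) := by
    conv_lhs => rw [hA.spectral_theorem, Unitary.conjStarAlgAut_apply]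
    rw [← Matrix.smul_mul, ← Matrix.mul_smul]
    congr 2
    ext i j
    by_cases h : i = j <;> simp [h, Matrix.diagonal_apply, Function.comp]
  rw [h1, charpoly_unitary_conj _ _ (hA.eigenvectorUnitary).2, charpoly_diagonal]

lemma sum_eigenvalues_eq_trace {A : Matrix n n ℂ} (hA : A.IsHermitian) :
    (∑ i, ((hA.eigenvalues i : ℝ) : ℂ)) = A.trace := by
  conv_rhs => rw [hA.spectral_theorem, Unitary.conjStarAlgAut_apply]
  rw [Matrix.trace_mul_comm, ← Matrix.mul_assoc, Unitary.coe_star_mul_self, Matrix.one_mul,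
    Matrix.trace_diagonal]
  simp



lemma pointwise_klein (c l a b : ℝ) (hc : 0 ≤ c) (hl : 0 ≤ l) (ha : 0 ≤ a) (hb : 0 ≤ b)
    (hsupp : c ≠ 0 → 0 < l → 0 < a ∧ 0 < b) :
    c * (l - a * b) ≤ c * (l * Real.log l - l * Real.log a - l * Real.log b) := by
  rcases eq_or_lt_of_le hc with hc0 | hc0
  · simp [← hc0]
  rcases eq_or_lt_of_le hl with hl0 | hl0
  · simp only [← hl0]
    have : (0:ℝ) - a * b ≤ 0 := by nlinarith
    nlinarith
  obtain ⟨ha0, hb0⟩ := hsupp (ne_of_gt hc0) hl0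
  have hab : 0 < a * b := mul_pos ha0 hb0
  have ht : 0 < a * b / l := div_pos hab hl0
  have hlog := Real.log_le_sub_one_of_pos ht
  rw [Real.log_div (ne_of_gt hab) (ne_of_gt hl0), Real.log_mul (ne_of_gt ha0) (ne_of_gt hb0)] at hlog
  have h2 : l * (Real.log a + Real.log b - Real.log l) ≤ l * (a * b / l - 1) :=
    mul_le_mul_of_nonneg_left hlog hl
  have hdiv : l * (a * b / l) = a * b := by field_simp
  have h3 : l - a * b ≤ l * Real.log l - l * Real.log a - l * Real.log b := by nlinarith
  exact mul_le_mul_of_nonneg_left h3 hc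

lemma gibbs_core {R I J : Type*} [Fintype R] [Fintype I] [Fintype J]
    (c : R → I → J → ℝ) (l : R → ℝ) (a : I → ℝ) (b : J → ℝ)
    (hc0 : ∀ r i j, 0 ≤ c r i j) (hl0 : ∀ r, 0 ≤ l r)
    (hc1 : ∀ r, ∑ i, ∑ j, c r i j = 1)
    (hc2 : ∀ i j, ∑ r, c r i j = 1)
    (ha : ∀ i, a i = ∑ j, ∑ r, c r i j * l r)
    (hb : ∀ j, b j = ∑ i, ∑ r, c r i j * l r)
    (hsl : ∑ r, l r = 1) (hsa : ∑ i, a i = 1) (hsb : ∑ j, b j = 1) :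
    ∑ r, Real.negMulLog (l r) ≤ ∑ i, Real.negMulLog (a i) + ∑ j, Real.negMulLog (b j) := by
  have ha0 : ∀ i, 0 ≤ a i := by
    intro i
    rw [ha i]
    exact Finset.sum_nonneg fun j _ => Finset.sum_nonneg fun r _ =>
      mul_nonneg (hc0 r i j) (hl0 r)
  have hb0 : ∀ j, 0 ≤ b j := by
    intro j
    rw [hb j]
    exact Finset.sum_nonneg fun i _ => Finset.sum_nonneg fun r _ =>
      mul_nonneg (hc0 r i j) (hl0 r)
  -- support facts
  have hsupp : ∀ r i j, c r i j ≠ 0 → 0 < l r → 0 < a i ∧ 0 < b j := by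
    intro r i j hcne hlr
    have hterm : 0 < c r i j * l r := mul_pos (lt_of_le_of_ne (hc0 r i j) (Ne.symm hcne)) hlr
    constructor
    · rw [ha i]
      calc (0:ℝ) < c r i j * l r := hterm
        _ ≤ ∑ r', c r' i j * l r' := Finset.single_le_sum
            (fun r' _ => mul_nonneg (hc0 r' i j) (hl0 r')) (Finset.mem_univ r)
        _ ≤ ∑ j', ∑ r', c r' i j' * l r' := Finset.single_le_sum
            (f := fun j' => ∑ r', c r' i j' * l r')
            (fun j' _ => Finset.sum_nonneg fun r' _ => mul_nonneg (hc0 r' i j') (hl0 r'))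
            (Finset.mem_univ j)
    · rw [hb j]
      calc (0:ℝ) < c r i j * l r := hterm
        _ ≤ ∑ r', c r' i j * l r' := Finset.single_le_sum
            (fun r' _ => mul_nonneg (hc0 r' i j) (hl0 r')) (Finset.mem_univ r)
        _ ≤ ∑ i', ∑ r', c r' i' j * l r' := Finset.single_le_sum
            (f := fun i' => ∑ r', c r' i' j * l r')
            (fun i' _ => Finset.sum_nonneg fun r' _ => mul_nonneg (hc0 r' i' j) (hl0 r'))
            (Finset.mem_univ i)
  -- pointwise
  have hpt : ∀ r i j, c r i j * (l r - a i * b j)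
      ≤ c r i j * (l r * Real.log (l r) - l r * Real.log (a i) - l r * Real.log (b j)) := by
    intro r i j
    exact pointwise_klein _ _ _ _ (hc0 r i j) (hl0 r) (ha0 i) (hb0 j) (hsupp r i j)
  have hsum := Finset.sum_le_sum (fun r (_ : r ∈ Finset.univ) =>
    Finset.sum_le_sum (fun i (_ : i ∈ Finset.univ) =>
      Finset.sum_le_sum (fun j (_ : j ∈ Finset.univ) => hpt r i j)))
  -- LHS value
  have hL : ∑ r, ∑ i, ∑ j, c r i j * (l r - a i * b j) = 0 := by
    have e1 : ∑ r, ∑ i, ∑ j, c r i j * l r = 1 := by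
      have : ∀ r, ∑ i, ∑ j, c r i j * l r = l r := by
        intro r
        rw [show ∑ i, ∑ j, c r i j * l r = (∑ i, ∑ j, c r i j) * l r by
          rw [Finset.sum_mul]; exact Finset.sum_congr rfl fun i _ => (Finset.sum_mul _ _ _).symm,
          hc1 r, one_mul]
      rw [Finset.sum_congr rfl fun r _ => this r, hsl]
    have e2 : ∑ r, ∑ i, ∑ j, c r i j * (a i * b j) = 1 := by
      rw [Finset.sum_comm]
      have : ∀ i, ∑ r, ∑ j, c r i j * (a i * b j) = a i := by
        intro i
        rw [Finset.sum_comm]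
        have : ∀ j, ∑ r, c r i j * (a i * b j) = a i * b j := by
          intro j
          rw [← Finset.sum_mul, hc2 i j, one_mul]
        rw [Finset.sum_congr rfl fun j _ => this j, ← Finset.mul_sum, hsb, mul_one]
      rw [Finset.sum_congr rfl fun i _ => this i, hsa]
    calc ∑ r, ∑ i, ∑ j, c r i j * (l r - a i * b j)
        = ∑ r, ∑ i, ∑ j, (c r i j * l r - c r i j * (a i * b j)) := by
          refine Finset.sum_congr rfl fun r _ => Finset.sum_congr rfl fun i _ =>
            Finset.sum_congr rfl fun j _ => ?_
          ring
      _ = (∑ r, ∑ i, ∑ j, c r i j * l r) - ∑ r, ∑ i, ∑ j, c r i j * (a i * b j) := by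
          simp [Finset.sum_sub_distrib]
      _ = 0 := by rw [e1, e2]; ring
  -- RHS value
  have hR : ∑ r, ∑ i, ∑ j, c r i j *
        (l r * Real.log (l r) - l r * Real.log (a i) - l r * Real.log (b j))
      = ∑ r, l r * Real.log (l r) - ∑ i, a i * Real.log (a i) - ∑ j, b j * Real.log (b j) := by
    have t1 : ∑ r, ∑ i, ∑ j, c r i j * (l r * Real.log (l r)) = ∑ r, l r * Real.log (l r) := by
      refine Finset.sum_congr rfl fun r _ => ?_
      rw [show ∑ i, ∑ j, c r i j * (l r * Real.log (l r))
          = (∑ i, ∑ j, c r i j) * (l r * Real.log (l r)) by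
        rw [Finset.sum_mul]; exact Finset.sum_congr rfl fun i _ => (Finset.sum_mul _ _ _).symm,
        hc1 r, one_mul]
    have t2 : ∑ r, ∑ i, ∑ j, c r i j * (l r * Real.log (a i))
        = ∑ i, a i * Real.log (a i) := by
      rw [Finset.sum_comm]
      refine Finset.sum_congr rfl fun i _ => ?_
      calc ∑ r, ∑ j, c r i j * (l r * Real.log (a i))
          = (∑ j, ∑ r, c r i j * l r) * Real.log (a i) := by
            rw [Finset.sum_comm, Finset.sum_mul]
            refine Finset.sum_congr rfl fun j _ => ?_
            rw [Finset.sum_mul]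
            exact Finset.sum_congr rfl fun r _ => by ring
        _ = a i * Real.log (a i) := by rw [← ha i]
    have t3 : ∑ r, ∑ i, ∑ j, c r i j * (l r * Real.log (b j))
        = ∑ j, b j * Real.log (b j) := by
      have swap : ∑ r, ∑ i, ∑ j, c r i j * (l r * Real.log (b j))
          = ∑ j, ∑ i, ∑ r, c r i j * (l r * Real.log (b j)) := by
        calc ∑ r, ∑ i, ∑ j, c r i j * (l r * Real.log (b j))
            = ∑ i, ∑ r, ∑ j, c r i j * (l r * Real.log (b j)) := Finset.sum_comm
          _ = ∑ i, ∑ j, ∑ r, c r i j * (l r * Real.log (b j)) :=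
              Finset.sum_congr rfl fun i _ => Finset.sum_comm
          _ = ∑ j, ∑ i, ∑ r, c r i j * (l r * Real.log (b j)) := Finset.sum_comm
      rw [swap]
      refine Finset.sum_congr rfl fun j _ => ?_
      calc ∑ i, ∑ r, c r i j * (l r * Real.log (b j))
          = (∑ i, ∑ r, c r i j * l r) * Real.log (b j) := by
            rw [Finset.sum_mul]
            refine Finset.sum_congr rfl fun i _ => ?_
            rw [Finset.sum_mul]
            exact Finset.sum_congr rfl fun r _ => by ring
        _ = b j * Real.log (b j) := by rw [← hb j]
    calc ∑ r, ∑ i, ∑ j, c r i j *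
          (l r * Real.log (l r) - l r * Real.log (a i) - l r * Real.log (b j))
        = ∑ r, ∑ i, ∑ j, (c r i j * (l r * Real.log (l r))
            - c r i j * (l r * Real.log (a i)) - c r i j * (l r * Real.log (b j))) := by
          refine Finset.sum_congr rfl fun r _ => Finset.sum_congr rfl fun i _ =>
            Finset.sum_congr rfl fun j _ => ?_
          ring
      _ = _ := by
          simp only [Finset.sum_sub_distrib]
          rw [t1, t2, t3]
  rw [hL, hR] at hsum
  simp only [Real.negMulLog, neg_mul]
  rw [Finset.sum_neg_distrib, Finset.sum_neg_distrib, Finset.sum_neg_distrib]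
  linarith


lemma entS_congr {A B : Matrix n n ℂ} (h : A = B) (hA : A.IsHermitian) (hB : B.IsHermitian)
    (f : ℝ → ℝ) : ∑ i, f (hA.eigenvalues i) = ∑ i, f (hB.eigenvalues i) := by
  subst h
  rfl

lemma sum_negMulLog_eig_mul_conjTranspose_comm (M : Matrix m n ℂ)
    (h1 : (M * Mᴴ).IsHermitian) (h2 : (Mᴴ * M).IsHermitian) (f : ℝ → ℝ) (hf : f 0 = 0) :
    ∑ i, f (h1.eigenvalues i) = ∑ j, f (h2.eigenvalues j) :=
  sum_f_eigenvalues_of_roots_eq h1 h2 f hf (charpoly_mul_conjTranspose_comm M)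

lemma subadditivity {m n : Type*} [Fintype m] [DecidableEq m] [Fintype n] [DecidableEq n]
    {R : Matrix (m × n) (m × n) ℂ} (hR : R.PosSemidef) (htr : R.trace = 1)
    {RA : Matrix m m ℂ} (hRAdef : ∀ x y, RA x y = ∑ b, R (x, b) (y, b))
    {RB : Matrix n n ℂ} (hRBdef : ∀ x y, RB x y = ∑ a, R (a, x) (a, y))
    (hRA : RA.IsHermitian) (hRB : RB.IsHermitian) :
    ∑ r, Real.negMulLog (hR.1.eigenvalues r)
      ≤ ∑ i, Real.negMulLog (hRA.eigenvalues i) + ∑ j, Real.negMulLog (hRB.eigenvalues j) := by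
  classical
  set lam := hR.1.eigenvalues with hlam
  set av := hRA.eigenvalues with hav
  set bv := hRB.eigenvalues with hbv
  set V : Matrix (m × n) (m × n) ℂ := (hR.1.eigenvectorUnitary : Matrix (m × n) (m × n) ℂ) with hVdef
  set P : Matrix m m ℂ := (hRA.eigenvectorUnitary : Matrix m m ℂ) with hPdef
  set Q : Matrix n n ℂ := (hRB.eigenvectorUnitary : Matrix n n ℂ) with hQdef
  have hV1 : V * star V = 1 := Matrix.mem_unitaryGroup_iff.mp hR.1.eigenvectorUnitary.2
  have hV2 : star V * V = 1 := Matrix.mem_unitaryGroup_iff'.mp hR.1.eigenvectorUnitary.2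
  have hP1 : P * star P = 1 := Matrix.mem_unitaryGroup_iff.mp hRA.eigenvectorUnitary.2
  have hQ1 : Q * star Q = 1 := Matrix.mem_unitaryGroup_iff.mp hRB.eigenvectorUnitary.2
  have hP2 : star P * P = 1 := Matrix.mem_unitaryGroup_iff'.mp hRA.eigenvectorUnitary.2
  have hQ2 : star Q * Q = 1 := Matrix.mem_unitaryGroup_iff'.mp hRB.eigenvectorUnitary.2
  set W : Matrix (m × n) (m × n) ℂ := P ⊗ₖ Q with hWdef
  have hstarW : star W = (star P) ⊗ₖ (star Q) := by
    ext u v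
    obtain ⟨x, y⟩ := u; obtain ⟨x', y'⟩ := v
    simp only [hWdef, Matrix.star_apply, Matrix.kronecker_apply, star_mul']
  have hW1 : W * star W = 1 := by
    rw [hstarW, hWdef, ← Matrix.mul_kronecker_mul, hP1, hQ1, Matrix.one_kronecker_one]
  have hW2 : star W * W = 1 := by
    rw [hstarW, hWdef, ← Matrix.mul_kronecker_mul, hP2, hQ2, Matrix.one_kronecker_one]
  set G : Matrix (m × n) (m × n) ℂ := star V * W with hGdef
  have hstarG : star G = star W * V := by rw [hGdef, Matrix.star_mul, star_star]
  have hG1 : G * star G = 1 := by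
    rw [hstarG, hGdef]
    calc star V * W * (star W * V) = star V * (W * star W * V) := by
          simp only [Matrix.mul_assoc]
      _ = 1 := by rw [hW1, Matrix.one_mul, hV2]
  have hG2 : star G * G = 1 := by
    rw [hstarG, hGdef]
    calc star W * V * (star V * W) = star W * (V * star V * W) := by
          simp only [Matrix.mul_assoc]
      _ = 1 := by rw [hV1, Matrix.one_mul, hW2]
  set c : (m × n) → m → n → ℝ := fun r i j => Complex.normSq (G r (i, j)) with hcdef
  -- column/row sums of |G|^2
  have hc1 : ∀ r, ∑ i, ∑ j, c r i j = 1 := by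
    intro r
    have h : (G * star G) r r = (1 : Matrix (m × n) (m × n) ℂ) r r := by rw [hG1]
    rw [Matrix.mul_apply, Matrix.one_apply_eq] at h
    have h2 : ∀ s, G r s * (star G) s r = (Complex.normSq (G r s) : ℂ) := by
      intro s
      rw [Matrix.star_apply, ← Complex.mul_conj]
      rfl
    rw [Finset.sum_congr rfl fun s _ => h2 s] at h
    have h3 := congrArg Complex.re h
    rw [Complex.re_sum] at h3
    simp only [Complex.ofReal_re, Complex.one_re] at h3
    rw [← h3, Fintype.sum_prod_type]
  have hc2 : ∀ i j, ∑ r, c r i j = 1 := by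
    intro i j
    have h : (star G * G) (i, j) (i, j) = (1 : Matrix (m × n) (m × n) ℂ) (i, j) (i, j) := by
      rw [hG2]
    rw [Matrix.mul_apply, Matrix.one_apply_eq] at h
    have h2 : ∀ r, (star G) (i, j) r * G r (i, j) = (Complex.normSq (G r (i, j)) : ℂ) := by
      intro r
      rw [Matrix.star_apply, mul_comm, ← Complex.mul_conj]
      rfl
    rw [Finset.sum_congr rfl fun r _ => h2 r] at h
    have h3 := congrArg Complex.re h
    rw [Complex.re_sum] at h3
    simp only [Complex.ofReal_re, Complex.one_re] at h3
    exact h3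
  -- diagonal entries of conjugated matrix
  have hmat : star W * R * W = star G * Matrix.diagonal (RCLike.ofReal ∘ lam) * G := by
    rw [hstarG, hGdef]
    conv_lhs => rw [hR.1.spectral_theorem, Unitary.conjStarAlgAut_apply]
    simp only [Matrix.mul_assoc]
    rfl
  have hdiag : ∀ s : m × n, (star W * R * W) s s
      = ∑ r, (Complex.normSq (G r s) : ℂ) * (lam r : ℂ) := by
    intro s
    rw [hmat, Matrix.mul_apply]
    refine Finset.sum_congr rfl fun r _ => ?_
    rw [Matrix.mul_diagonal, Matrix.star_apply]
    have hco : ((RCLike.ofReal ∘ lam) r : ℂ) = ((lam r : ℝ) : ℂ) := rfl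
    have : star (G r s) * (RCLike.ofReal ∘ lam) r * G r s
        = (G r s * star (G r s)) * ((lam r : ℝ) : ℂ) := by
      rw [hco]; ring
    rw [this, ← Complex.mul_conj]
    rfl
  -- orthogonality
  have hQo : ∀ y y' : n, ∑ j, star (Q y j) * Q y' j = if y' = y then 1 else 0 := by
    intro y y'
    have h : (Q * star Q) y' y = (1 : Matrix n n ℂ) y' y := by rw [hQ1]
    rw [Matrix.mul_apply] at h
    simp only [Matrix.star_apply] at h
    rw [Matrix.one_apply] at h
    rw [← h]
    exact Finset.sum_congr rfl fun j _ => mul_comm _ _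
  have hPo : ∀ x x' : m, ∑ i, star (P x i) * P x' i = if x' = x then 1 else 0 := by
    intro x x'
    have h : (P * star P) x' x = (1 : Matrix m m ℂ) x' x := by rw [hP1]
    rw [Matrix.mul_apply] at h
    simp only [Matrix.star_apply] at h
    rw [Matrix.one_apply] at h
    rw [← h]
    exact Finset.sum_congr rfl fun i _ => mul_comm _ _
  have hentry : ∀ (i i' : m) (j j' : n), (star W * R * W) (i, j) (i', j')
      = ∑ v : m × n, ∑ u : m × n,
          star (P u.1 i) * star (Q u.2 j) * R u v * (P v.1 i' * Q v.2 j') := by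
    intro i i' j j'
    rw [Matrix.mul_apply]
    refine Finset.sum_congr rfl fun v _ => ?_
    rw [Matrix.mul_apply, Finset.sum_mul]
    refine Finset.sum_congr rfl fun u _ => ?_
    have h1 : (star W) (i, j) u = star (P u.1 i) * star (Q u.2 j) := by
      rw [hstarW]; rfl
    have h2 : W v (i', j') = P v.1 i' * Q v.2 j' := rfl
    rw [h1, h2]
  have hptA : ∀ i : m, ∑ j, (star W * R * W) (i, j) (i, j) = (star P * RA * P) i i := by
    intro i
    calc ∑ j, (star W * R * W) (i, j) (i, j)
        = ∑ j, ∑ v : m × n, ∑ u : m × n,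
            star (P u.1 i) * star (Q u.2 j) * R u v * (P v.1 i * Q v.2 j) :=
          Finset.sum_congr rfl fun j _ => hentry i i j j
      _ = ∑ v : m × n, ∑ u : m × n, ∑ j,
            star (P u.1 i) * star (Q u.2 j) * R u v * (P v.1 i * Q v.2 j) := by
          rw [Finset.sum_comm]
          exact Finset.sum_congr rfl fun v _ => Finset.sum_comm
      _ = ∑ v : m × n, ∑ u : m × n,
            (star (P u.1 i) * R u v * P v.1 i) * (if v.2 = u.2 then 1 else 0) := by
          refine Finset.sum_congr rfl fun v _ => Finset.sum_congr rfl fun u _ => ?_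
          rw [← hQo u.2 v.2, Finset.mul_sum]
          exact Finset.sum_congr rfl fun j _ => by ring
      _ = ∑ v : m × n, ∑ x : m, star (P x i) * R (x, v.2) v * P v.1 i := by
          refine Finset.sum_congr rfl fun v _ => ?_
          rw [Fintype.sum_prod_type]
          refine Finset.sum_congr rfl fun x _ => ?_
          simp only [mul_ite, mul_one, mul_zero]
          rw [Finset.sum_ite_eq]
          simp
      _ = (star P * RA * P) i i := by
          rw [Matrix.mul_apply, Fintype.sum_prod_type]
          refine Finset.sum_congr rfl fun x' _ => ?_
          rw [Matrix.mul_apply, Finset.sum_mul, Finset.sum_comm]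
          refine Finset.sum_congr rfl fun x _ => ?_
          rw [Matrix.star_apply, hRAdef x x', Finset.mul_sum, Finset.sum_mul]
  have hptB : ∀ j : n, ∑ i, (star W * R * W) (i, j) (i, j) = (star Q * RB * Q) j j := by
    intro j
    calc ∑ i, (star W * R * W) (i, j) (i, j)
        = ∑ i, ∑ v : m × n, ∑ u : m × n,
            star (P u.1 i) * star (Q u.2 j) * R u v * (P v.1 i * Q v.2 j) :=
          Finset.sum_congr rfl fun i _ => hentry i i j j
      _ = ∑ v : m × n, ∑ u : m × n, ∑ i,
            star (P u.1 i) * star (Q u.2 j) * R u v * (P v.1 i * Q v.2 j) := by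
          rw [Finset.sum_comm]
          exact Finset.sum_congr rfl fun v _ => Finset.sum_comm
      _ = ∑ v : m × n, ∑ u : m × n,
            (star (Q u.2 j) * R u v * Q v.2 j) * (if v.1 = u.1 then 1 else 0) := by
          refine Finset.sum_congr rfl fun v _ => Finset.sum_congr rfl fun u _ => ?_
          rw [← hPo u.1 v.1, Finset.mul_sum]
          exact Finset.sum_congr rfl fun i _ => by ring
      _ = ∑ v : m × n, ∑ y : n, star (Q y j) * R (v.1, y) v * Q v.2 j := by
          refine Finset.sum_congr rfl fun v _ => ?_
          rw [Fintype.sum_prod_type, Finset.sum_comm]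
          refine Finset.sum_congr rfl fun y _ => ?_
          simp only [mul_ite, mul_one, mul_zero]
          rw [Finset.sum_ite_eq]
          simp
      _ = ∑ y' : n, ∑ y : n, ∑ x' : m, star (Q y j) * R (x', y) (x', y') * Q y' j := by
          rw [Fintype.sum_prod_type, Finset.sum_comm]
          refine Finset.sum_congr rfl fun y' _ => Finset.sum_comm
      _ = (star Q * RB * Q) j j := by
          rw [Matrix.mul_apply]
          refine Finset.sum_congr rfl fun y' _ => ?_
          rw [Matrix.mul_apply, Finset.sum_mul]
          refine Finset.sum_congr rfl fun y _ => ?_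
          rw [Matrix.star_apply, hRBdef y y', Finset.mul_sum, Finset.sum_mul]
  -- marginal eigenvalue identities
  have ha : ∀ i, av i = ∑ j, ∑ r, c r i j * lam r := by
    intro i
    have h1 : (star P * RA * P) i i = ((av i : ℝ) : ℂ) := by
      have hsd := hRA.conjStarAlgAut_star_eigenvectorUnitary
      rw [Unitary.conjStarAlgAut_apply, Unitary.coe_star, star_star] at hsd
      rw [hPdef, hsd, Matrix.diagonal_apply_eq]
      rfl
    have h2 : ((av i : ℝ) : ℂ) = ∑ j, ∑ r, ((c r i j * lam r : ℝ) : ℂ) := by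
      rw [← h1, ← hptA i, Finset.sum_congr rfl fun j (_ : j ∈ Finset.univ) => hdiag (i, j)]
      push_cast
      rfl
    exact_mod_cast h2
  have hb : ∀ j, bv j = ∑ i, ∑ r, c r i j * lam r := by
    intro j
    have h1 : (star Q * RB * Q) j j = ((bv j : ℝ) : ℂ) := by
      have hsd := hRB.conjStarAlgAut_star_eigenvectorUnitary
      rw [Unitary.conjStarAlgAut_apply, Unitary.coe_star, star_star] at hsd
      rw [hQdef, hsd, Matrix.diagonal_apply_eq]
      rfl
    have h2 : ((bv j : ℝ) : ℂ) = ∑ i, ∑ r, ((c r i j * lam r : ℝ) : ℂ) := by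
      rw [← h1, ← hptB j, Finset.sum_congr rfl fun i (_ : i ∈ Finset.univ) => hdiag (i, j)]
      push_cast
      rfl
    exact_mod_cast h2
  -- traces
  have hsl : ∑ r, lam r = 1 := by
    have h := sum_eigenvalues_eq_trace hR.1
    rw [htr] at h
    exact_mod_cast h
  have htrA : RA.trace = 1 := by
    rw [← htr, Matrix.trace, Matrix.trace, Fintype.sum_prod_type]
    exact Finset.sum_congr rfl fun x _ => hRAdef x x
  have htrB : RB.trace = 1 := by
    rw [← htr, Matrix.trace, Matrix.trace, Fintype.sum_prod_type, Finset.sum_comm]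
    exact Finset.sum_congr rfl fun y _ => hRBdef y y
  have hsa : ∑ i, av i = 1 := by
    have h := sum_eigenvalues_eq_trace hRA
    rw [htrA] at h
    exact_mod_cast h
  have hsb : ∑ j, bv j = 1 := by
    have h := sum_eigenvalues_eq_trace hRB
    rw [htrB] at h
    exact_mod_cast h
  exact gibbs_core c lam av bv (fun r i j => Complex.normSq_nonneg _)
    (fun r => hR.eigenvalues_nonneg r) hc1 hc2 ha hb hsl hsa hsb


end VN

/-- Von Neumann entropy of a Hermitian matrix via its eigenvalues. -/
noncomputable def vnEntropy {n : Type*} [Fintype n] [DecidableEq n]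
    {A : Matrix n n ℂ} (hA : A.IsHermitian) : ℝ :=
  -∑ i, hA.eigenvalues i * Real.log (hA.eigenvalues i)

lemma vnEntropy_eq {n : Type*} [Fintype n] [DecidableEq n]
    {A : Matrix n n ℂ} (hA : A.IsHermitian) :
    vnEntropy hA = ∑ i, Real.negMulLog (hA.eigenvalues i) := by
  rw [vnEntropy]
  simp [Real.negMulLog, Finset.sum_neg_distrib]

/-- The average entropy of the post-measurement states is bounded by the entropy
of the input state: `∑ pᵢ S(ρᵢ) ≤ S(ρ)`. -/
theorem average_output_entropy_le_input_entropy {k N : ℕ}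
    (K : Fin k → Matrix (Fin N) (Fin N) ℂ)
    (hK : ∑ i, (K i)ᴴ * K i = 1)
    (ρ : Matrix (Fin N) (Fin N) ℂ) (hρ : ρ.PosSemidef) (hρtr : ρ.trace = 1)
    (p : Fin k → ℝ) (hp : ∀ i, (p i : ℂ) = (K i * ρ * (K i)ᴴ).trace)
    (ρi : Fin k → Matrix (Fin N) (Fin N) ℂ)
    (hρidef : ∀ i, p i ≠ 0 → ρi i = ((p i : ℂ))⁻¹ • (K i * ρ * (K i)ᴴ))
    (hρiH : ∀ i, (ρi i).IsHermitian) :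
    ∑ i, p i * vnEntropy (hρiH i) ≤ vnEntropy hρ.isHermitian := by
  classical
  set σ : Fin k → Matrix (Fin N) (Fin N) ℂ := fun i => K i * ρ * (K i)ᴴ with hσdef
  have hσpsd : ∀ i, (σ i).PosSemidef := fun i => hρ.mul_mul_conjTranspose_same (K i)
  have hpsum : ∑ i, (p i : ℂ) = 1 := by
    calc ∑ i, (p i : ℂ) = ∑ i, ((K i)ᴴ * K i * ρ).trace := by
          refine Finset.sum_congr rfl fun i _ => ?_
          rw [hp i, Matrix.trace_mul_comm (K i * ρ) ((K i)ᴴ)]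
          congr 1
          simp only [Matrix.mul_assoc]
      _ = (∑ i, (K i)ᴴ * K i * ρ).trace := (Matrix.trace_sum _ _).symm
      _ = 1 := by rw [← Finset.sum_mul, hK, Matrix.one_mul, hρtr]
  obtain ⟨B, hB⟩ : ∃ B : Matrix (Fin N) (Fin N) ℂ, ρ = Bᴴ * B := by
    open scoped MatrixOrder in
    exact ⟨CFC.sqrt ρ, by
      rw [← star_eq_conjTranspose, (CFC.sqrt_nonneg ρ).isSelfAdjoint.star_eq,
        CFC.sqrt_mul_sqrt_self ρ hρ.nonneg]⟩
  set W := Bᴴ with hWdef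
  have hW : ρ = W * Wᴴ := by rw [hWdef, Matrix.conjTranspose_conjTranspose]; exact hB
  set M : Matrix (Fin N × Fin k) (Fin N × Fin k) ℂ
    := Matrix.blockDiagonal (fun i => K i * W) with hM
  have hblock : ∀ i, (K i * W) * (K i * W)ᴴ = σ i := by
    intro i
    rw [Matrix.conjTranspose_mul]
    calc K i * W * (Wᴴ * (K i)ᴴ) = K i * (W * Wᴴ) * (K i)ᴴ := by
          simp only [Matrix.mul_assoc]
      _ = σ i := by rw [← hW]
  have hMMH : M * Mᴴ = Matrix.blockDiagonal σ := by
    rw [hM, Matrix.blockDiagonal_conjTranspose, ← Matrix.blockDiagonal_mul]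
    exact congrArg _ (funext hblock)
  set R := Mᴴ * M with hRdef
  have hRBD : R = Matrix.blockDiagonal (fun i => (K i * W)ᴴ * (K i * W)) := by
    rw [hRdef, hM, Matrix.blockDiagonal_conjTranspose, ← Matrix.blockDiagonal_mul]
  have hRpsd : R.PosSemidef := Matrix.posSemidef_conjTranspose_mul_self M
  have hMMHpsd : (M * Mᴴ).PosSemidef := Matrix.posSemidef_self_mul_conjTranspose M
  have hBDσH : (Matrix.blockDiagonal σ).IsHermitian := hMMH ▸ hMMHpsd.1
  have hηtr : ∀ i, ((K i * W)ᴴ * (K i * W)).trace = (p i : ℂ) := by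
    intro i
    rw [Matrix.trace_mul_comm, hblock i, hp i]
  have hWKKW : ∑ i : Fin k, (K i * W)ᴴ * (K i * W) = Wᴴ * W := by
    calc ∑ i : Fin k, (K i * W)ᴴ * (K i * W)
        = ∑ i : Fin k, Wᴴ * ((K i)ᴴ * K i) * W := by
          refine Finset.sum_congr rfl fun i _ => ?_
          rw [Matrix.conjTranspose_mul]
          simp only [Matrix.mul_assoc]
      _ = Wᴴ * (∑ i, (K i)ᴴ * K i) * W := by
          rw [Finset.mul_sum, Finset.sum_mul]
      _ = Wᴴ * W := by rw [hK, Matrix.mul_one]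
  have hRAdef : ∀ x y, (Wᴴ * W) x y = ∑ b : Fin k, R (x, b) (y, b) := by
    intro x y
    rw [← hWKKW, Matrix.sum_apply]
    refine Finset.sum_congr rfl fun b _ => ?_
    rw [hRBD, Matrix.blockDiagonal_apply]
    simp
  have hRBdef : ∀ x y : Fin k,
      (Matrix.diagonal (fun i => (p i : ℂ))) x y = ∑ a : Fin N, R (a, x) (a, y) := by
    intro x y
    by_cases h : x = y
    · subst h
      rw [Matrix.diagonal_apply_eq, ← hηtr x, Matrix.trace]
      refine Finset.sum_congr rfl fun a _ => ?_
      rw [hRBD, Matrix.blockDiagonal_apply]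
      simp [Matrix.diag]
    · rw [Matrix.diagonal_apply_ne _ h]
      symm
      refine Finset.sum_eq_zero fun a _ => ?_
      rw [hRBD, Matrix.blockDiagonal_apply]
      simp [h]
  have hWWH : (Wᴴ * W).IsHermitian := (Matrix.posSemidef_conjTranspose_mul_self W).1
  have hdiagH : (Matrix.diagonal (fun i => (p i : ℂ))).IsHermitian := by
    have hst : (star fun i => ((p i : ℝ) : ℂ)) = fun i => ((p i : ℝ) : ℂ) := by
      funext i
      simp only [Pi.star_apply, Complex.star_def]
      exact Complex.conj_ofReal (p i)
    rw [Matrix.IsHermitian, Matrix.diagonal_conjTranspose, hst]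
  have htrR : R.trace = 1 := by
    rw [hRBD, Matrix.trace_blockDiagonal,
      Finset.sum_congr rfl fun i (_ : i ∈ Finset.univ) => hηtr i]
    exact hpsum
  have hsub := VN.subadditivity hRpsd htrR hRAdef hRBdef hWWH hdiagH
  have hRR : ∑ r, Real.negMulLog (hRpsd.1.eigenvalues r)
      = ∑ r, Real.negMulLog (hBDσH.eigenvalues r) := by
    have h := VN.sum_negMulLog_eig_mul_conjTranspose_comm M hMMHpsd.1 hRpsd.1
      Real.negMulLog Real.negMulLog_zero
    rw [← h]
    exact VN.entS_congr hMMH hMMHpsd.1 hBDσH Real.negMulLog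
  have hBD : ∑ r, Real.negMulLog (hBDσH.eigenvalues r)
      = ∑ i, ∑ l, Real.negMulLog ((hσpsd i).1.eigenvalues l) :=
    VN.sum_f_eig_blockDiagonal (fun i => (hσpsd i).1) hBDσH Real.negMulLog
  have hblockent : ∀ i, ∑ l, Real.negMulLog ((hσpsd i).1.eigenvalues l)
      = p i * vnEntropy (hρiH i) + Real.negMulLog (p i) := by
    intro i
    by_cases hpi : p i = 0
    · have htr0 : (σ i).trace = 0 := by rw [← hp i, hpi]; simp
      have hsum0 : ∑ l, (hσpsd i).1.eigenvalues l = 0 := by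
        have h := VN.sum_eigenvalues_eq_trace (hσpsd i).1
        rw [htr0] at h
        exact_mod_cast h
      have hallz : ∀ l, (hσpsd i).1.eigenvalues l = 0 := by
        intro l
        exact (Finset.sum_eq_zero_iff_of_nonneg
          (fun l' _ => (hσpsd i).eigenvalues_nonneg l')).mp hsum0 l (Finset.mem_univ l)
      rw [hpi]
      simp [hallz]
    · have hpiC : (p i : ℂ) ≠ 0 := Complex.ofReal_ne_zero.mpr hpi
      have hσsm : σ i = (p i : ℂ) • ρi i := by
        rw [hρidef i hpi, smul_smul, mul_inv_cancel₀ hpiC, one_smul]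
      have hcp : (σ i).charpoly
          = ∏ l, (X - Polynomial.C (((p i * (hρiH i).eigenvalues l : ℝ)) : ℂ)) := by
        rw [hσsm]
        exact VN.charpoly_real_smul (hρiH i) (p i)
      have hfe := VN.sum_f_of_charpoly_prod (hσpsd i).1 hcp Real.negMulLog
      have htrρi : ∑ l, (hρiH i).eigenvalues l = 1 := by
        have h1 : (ρi i).trace = 1 := by
          rw [hρidef i hpi, Matrix.trace_smul, ← hp i, smul_eq_mul,
            inv_mul_cancel₀ hpiC]
        have h := VN.sum_eigenvalues_eq_trace (hρiH i)
        rw [h1] at h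
        exact_mod_cast h
      rw [hfe, vnEntropy_eq]
      calc ∑ l, Real.negMulLog (p i * (hρiH i).eigenvalues l)
          = ∑ l, ((hρiH i).eigenvalues l * Real.negMulLog (p i)
              + p i * Real.negMulLog ((hρiH i).eigenvalues l)) := by
            refine Finset.sum_congr rfl fun l _ => ?_
            rw [Real.negMulLog_mul]
        _ = p i * (∑ l, Real.negMulLog ((hρiH i).eigenvalues l)) + Real.negMulLog (p i) := by
            rw [Finset.sum_add_distrib, ← Finset.sum_mul, htrρi, one_mul, Finset.mul_sum]
            ring
  have hdiagent : ∑ j, Real.negMulLog (hdiagH.eigenvalues j) = ∑ i, Real.negMulLog (p i) :=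
    VN.sum_f_of_charpoly_prod hdiagH (VN.charpoly_diagonal _) Real.negMulLog
  have hWent : ∑ i, Real.negMulLog (hWWH.eigenvalues i) = vnEntropy hρ.isHermitian := by
    have hWWHpsd : (W * Wᴴ).PosSemidef := Matrix.posSemidef_self_mul_conjTranspose W
    have h := VN.sum_negMulLog_eig_mul_conjTranspose_comm W hWWHpsd.1 hWWH
      Real.negMulLog Real.negMulLog_zero
    rw [← h, vnEntropy_eq]
    exact VN.entS_congr hW.symm hWWHpsd.1 hρ.isHermitian Real.negMulLog
  have hLHS : ∑ i, p i * vnEntropy (hρiH i)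
      = ∑ r, Real.negMulLog (hRpsd.1.eigenvalues r) - ∑ i, Real.negMulLog (p i) := by
    rw [hRR, hBD, Finset.sum_congr rfl fun i (_ : i ∈ Finset.univ) => hblockent i,
      Finset.sum_add_distrib]
    ring
  rw [hWent, hdiagent] at hsub
  rw [hLHS]
  linarith
end

section
/- For any two density matrices ρ₁, ρ₂ on a finite-dimensional Hilbert space and any purifications |Ψ₁⟩, |Ψ₂⟩ of them, |⟨Ψ₁|Ψ₂⟩|² ≤ F(ρ₁,ρ₂), and the maximum of |⟨Ψ₁|Ψ₂⟩|² over all purifications |Ψ₁⟩ of ρ₁ (with |Ψ₂⟩ fixed) equals F(ρ₁,ρ₂) = (Tr√(√ρ₁ ρ₂ √ρ₁))² (Uhlmann's theorem). -/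
open Matrix
open scoped ComplexOrder

/-- The square root of a positive semidefinite matrix (the definition that
Mathlib of December 2024 had as `Matrix.PosSemidef.sqrt`). -/
noncomputable def Matrix.PosSemidef.sqrt {n 𝕜 : Type*} [Fintype n] [DecidableEq n] [RCLike 𝕜]
    {A : Matrix n n 𝕜} (hA : A.PosSemidef) : Matrix n n 𝕜 :=
  hA.1.eigenvectorUnitary.1 * diagonal ((↑) ∘ (√·) ∘ hA.1.eigenvalues) *
  (star hA.1.eigenvectorUnitary : Matrix n n 𝕜)

theorem Matrix.PosSemidef.posSemidef_sqrt {n 𝕜 : Type*} [Fintype n] [DecidableEq n] [RCLike 𝕜]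
    {A : Matrix n n 𝕜} (hA : A.PosSemidef) : hA.sqrt.PosSemidef := by
  have hd : (diagonal ((↑) ∘ (√·) ∘ hA.1.eigenvalues : n → 𝕜)).PosSemidef :=
    PosSemidef.diagonal (fun i => by simp [Real.sqrt_nonneg])
  simpa [Matrix.PosSemidef.sqrt, Matrix.star_eq_conjTranspose] using
    hd.mul_mul_conjTranspose_same (hA.1.eigenvectorUnitary.1)

/-- `√ρ₁ ρ₂ √ρ₁` is positive semidefinite. -/
theorem sqrt_mul_mul_sqrt_posSemidef {n : Type*} [Fintype n] [DecidableEq n]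
    {ρ₁ ρ₂ : Matrix n n ℂ} (h1 : ρ₁.PosSemidef) (h2 : ρ₂.PosSemidef) :
    (h1.sqrt * ρ₂ * h1.sqrt).PosSemidef := by
  have h := h2.mul_mul_conjTranspose_same h1.sqrt
  rwa [h1.posSemidef_sqrt.isHermitian.eq] at h

/-- Quantum fidelity `F(ρ₁,ρ₂) = (Tr √(√ρ₁ ρ₂ √ρ₁))²`. -/
noncomputable def fidelity {n : Type*} [Fintype n] [DecidableEq n]
    {ρ₁ ρ₂ : Matrix n n ℂ} (h1 : ρ₁.PosSemidef) (h2 : ρ₂.PosSemidef) : ℝ :=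
  (((sqrt_mul_mul_sqrt_posSemidef h1 h2).sqrt).trace).re ^ 2

/-- `Ψ ∈ H' ⊗ H` is a purification of `ρ` if it is a unit vector whose
partial trace over the first factor equals `ρ`. -/
def IsPurification {m n : ℕ} (Ψ : Fin m × Fin n → ℂ)
    (ρ : Matrix (Fin n) (Fin n) ℂ) : Prop :=
  (∑ x, Complex.normSq (Ψ x) = 1) ∧
  ∀ a b, (∑ i, Matrix.vecMulVec Ψ (star Ψ) (i, a) (i, b)) = ρ a b

set_option linter.unusedSectionVars false

namespace UhlmannAux

variable {n : Type*} [Fintype n] [DecidableEq n]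

noncomputable def specFun {ρ : Matrix n n ℂ} (hρ : ρ.PosSemidef) (f : ℝ → ℝ) : Matrix n n ℂ :=
  (hρ.1.eigenvectorUnitary : Matrix n n ℂ) * diagonal ((↑) ∘ f ∘ hρ.1.eigenvalues) *
    (star hρ.1.eigenvectorUnitary : Matrix n n ℂ)

lemma spec_eq {A : Matrix n n ℂ} (hA : A.IsHermitian) :
    A = (hA.eigenvectorUnitary : Matrix n n ℂ) * diagonal (RCLike.ofReal ∘ hA.eigenvalues) *
      (star hA.eigenvectorUnitary : Matrix n n ℂ) := by
  have h := hA.spectral_theorem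
  rw [Unitary.conjStarAlgAut_apply] at h
  exact h

variable {ρ : Matrix n n ℂ} (hρ : ρ.PosSemidef)

lemma specFun_sqrt : specFun hρ Real.sqrt = hρ.sqrt := rfl

lemma specFun_mul (f g : ℝ → ℝ) :
    specFun hρ f * specFun hρ g = specFun hρ (fun t => f t * g t) := by
  unfold specFun
  have hU : (star hρ.1.eigenvectorUnitary : Matrix n n ℂ) *
      (hρ.1.eigenvectorUnitary : Matrix n n ℂ) = 1 := hρ.1.eigenvectorUnitary.prop.1
  have hd : (diagonal ((↑) ∘ f ∘ hρ.1.eigenvalues) : Matrix n n ℂ) *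
      diagonal ((↑) ∘ g ∘ hρ.1.eigenvalues) =
      diagonal ((↑) ∘ (fun t => f t * g t) ∘ hρ.1.eigenvalues) := by
    rw [diagonal_mul_diagonal]
    refine congrArg diagonal (funext fun i => ?_)
    simp only [Function.comp_apply, Complex.ofReal_mul]
  simp only [mul_assoc]
  rw [← mul_assoc (star hρ.1.eigenvectorUnitary : Matrix n n ℂ)
      (hρ.1.eigenvectorUnitary : Matrix n n ℂ), hU, one_mul,
    ← mul_assoc (diagonal _), hd]

lemma specFun_congr {f g : ℝ → ℝ} (h : ∀ i, f (hρ.1.eigenvalues i) = g (hρ.1.eigenvalues i)) :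
    specFun hρ f = specFun hρ g := by
  unfold specFun
  have hd : ((↑) ∘ f ∘ hρ.1.eigenvalues : n → ℂ) = (↑) ∘ g ∘ hρ.1.eigenvalues := by
    funext i
    simp [Function.comp, h i]
  rw [hd]

lemma specFun_conjTranspose (f : ℝ → ℝ) : (specFun hρ f)ᴴ = specFun hρ f := by
  unfold specFun
  have hd : (diagonal ((↑) ∘ f ∘ hρ.1.eigenvalues) : Matrix n n ℂ)ᴴ =
      diagonal ((↑) ∘ f ∘ hρ.1.eigenvalues) := by
    rw [diagonal_conjTranspose]
    refine congrArg diagonal (funext fun i => ?_)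
    simp [Complex.conj_ofReal]
  rw [star_eq_conjTranspose]
  calc (((hρ.1.eigenvectorUnitary : Matrix n n ℂ) * diagonal ((↑) ∘ f ∘ hρ.1.eigenvalues)) *
        (hρ.1.eigenvectorUnitary : Matrix n n ℂ)ᴴ)ᴴ
      = (hρ.1.eigenvectorUnitary : Matrix n n ℂ) *
        ((diagonal ((↑) ∘ f ∘ hρ.1.eigenvalues))ᴴ * (hρ.1.eigenvectorUnitary : Matrix n n ℂ)ᴴ) := by
        rw [conjTranspose_mul, conjTranspose_mul, conjTranspose_conjTranspose]
    _ = _ := by rw [hd, mul_assoc]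

lemma specFun_one : specFun hρ (fun _ => 1) = 1 := by
  unfold specFun
  have hv : ((↑) ∘ (fun (_ : ℝ) => (1:ℝ)) ∘ hρ.1.eigenvalues : n → ℂ) = fun _ => 1 := by
    funext i
    simp
  rw [hv, diagonal_one, mul_one]
  exact hρ.1.eigenvectorUnitary.prop.2

lemma specFun_id : specFun hρ (fun t => t) = ρ := by
  unfold specFun
  exact (spec_eq hρ.1).symm

theorem _root_.Matrix.PosSemidef.sqrt_mul_self : hρ.sqrt * hρ.sqrt = ρ := by
  rw [← specFun_sqrt, specFun_mul,
    specFun_congr hρ (g := fun t => t) fun i => Real.mul_self_sqrt (hρ.eigenvalues_nonneg i)]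
  exact specFun_id hρ

lemma specFun_posSemidef (f : ℝ → ℝ) (hf : ∀ i, 0 ≤ f (hρ.1.eigenvalues i)) :
    (specFun hρ f).PosSemidef := by
  unfold specFun
  rw [star_eq_conjTranspose]
  exact (Matrix.PosSemidef.diagonal (fun i => by
    rw [Function.comp_apply, Function.comp_apply]
    exact Complex.zero_le_real.mpr (hf i))).mul_mul_conjTranspose_same _

noncomputable def supp : Matrix n n ℂ :=
  specFun hρ (fun t => if t = 0 then 0 else 1)

noncomputable def pinvSqrt : Matrix n n ℂ :=
  specFun hρ (fun t => if t = 0 then 0 else (Real.sqrt t)⁻¹)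

lemma supp_conjTranspose : (supp hρ)ᴴ = supp hρ := specFun_conjTranspose hρ _

lemma supp_idem : supp hρ * supp hρ = supp hρ := by
  rw [supp, specFun_mul]
  refine specFun_congr hρ fun i => ?_
  by_cases h : hρ.1.eigenvalues i = 0 <;> simp [h]

lemma sqrt_mul_supp : hρ.sqrt * supp hρ = hρ.sqrt := by
  rw [← specFun_sqrt, supp, specFun_mul]
  refine specFun_congr hρ fun i => ?_
  by_cases h : hρ.1.eigenvalues i = 0 <;> simp [h]

lemma supp_mul_sqrt : supp hρ * hρ.sqrt = hρ.sqrt := by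
  rw [← specFun_sqrt, supp, specFun_mul]
  refine specFun_congr hρ fun i => ?_
  by_cases h : hρ.1.eigenvalues i = 0 <;> simp [h, mul_comm]

lemma pinvSqrt_conjTranspose : (pinvSqrt hρ)ᴴ = pinvSqrt hρ := specFun_conjTranspose hρ _

lemma pinvSqrt_mul_sqrt : pinvSqrt hρ * hρ.sqrt = supp hρ := by
  rw [← specFun_sqrt, pinvSqrt, specFun_mul, supp]
  refine specFun_congr hρ fun i => ?_
  by_cases h : hρ.1.eigenvalues i = 0
  · simp [h]
  · have hpos : 0 < hρ.1.eigenvalues i := lt_of_le_of_ne (hρ.eigenvalues_nonneg i) (Ne.symm h)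
    have : Real.sqrt (hρ.1.eigenvalues i) ≠ 0 := ne_of_gt (Real.sqrt_pos.mpr hpos)
    simp [h, inv_mul_cancel₀ this]

lemma pinvSqrt_mul_supp : pinvSqrt hρ * supp hρ = pinvSqrt hρ := by
  rw [pinvSqrt, supp, specFun_mul]
  refine specFun_congr hρ fun i => ?_
  by_cases h : hρ.1.eigenvalues i = 0 <;> simp [h]

lemma pinvSqrt_mul_rho_mul_pinvSqrt : pinvSqrt hρ * ρ * pinvSqrt hρ = supp hρ := by
  have key : pinvSqrt hρ * specFun hρ (fun t => t) * pinvSqrt hρ = supp hρ := by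
    rw [pinvSqrt, specFun_mul, specFun_mul, supp]
    refine specFun_congr hρ fun i => ?_
    by_cases h : hρ.1.eigenvalues i = 0
    · simp [h]
    · have hpos : 0 < hρ.1.eigenvalues i := lt_of_le_of_ne (hρ.eigenvalues_nonneg i) (Ne.symm h)
      have hs : Real.sqrt (hρ.1.eigenvalues i) ≠ 0 := ne_of_gt (Real.sqrt_pos.mpr hpos)
      have hmul : Real.sqrt (hρ.1.eigenvalues i) * Real.sqrt (hρ.1.eigenvalues i)
          = hρ.1.eigenvalues i := Real.mul_self_sqrt (le_of_lt hpos)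
      simp only [h, if_false]
      field_simp
      rw [Real.sq_sqrt hpos.le]
  rwa [specFun_id] at key

lemma rho_mul_supp : ρ * supp hρ = ρ := by
  have key : specFun hρ (fun t => t) * supp hρ = specFun hρ (fun t => t) := by
    rw [supp, specFun_mul]
    refine specFun_congr hρ fun i => ?_
    by_cases h : hρ.1.eigenvalues i = 0 <;> simp [h]
  rwa [specFun_id] at key

lemma supp_mul_rho : supp hρ * ρ = ρ := by
  have key : supp hρ * specFun hρ (fun t => t) = specFun hρ (fun t => t) := by
    rw [supp, specFun_mul]
    refine specFun_congr hρ fun i => ?_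
    by_cases h : hρ.1.eigenvalues i = 0 <;> simp [h]
  rwa [specFun_id] at key

/-- complement of a Hermitian idempotent is PSD -/
lemma one_sub_posSemidef {Q : Matrix n n ℂ} (hH : Qᴴ = Q) (hQ : Q * Q = Q) :
    ((1 : Matrix n n ℂ) - Q).PosSemidef := by
  have key : ((1 : Matrix n n ℂ) - Q)ᴴ * (1 - Q) = 1 - Q := by
    rw [conjTranspose_sub, conjTranspose_one, hH]
    rw [sub_mul, mul_sub, mul_sub, hQ]
    simp only [one_mul, mul_one]
    abel
  rw [← key]
  exact posSemidef_conjTranspose_mul_self _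

lemma one_sub_supp_posSemidef : ((1 : Matrix n n ℂ) - supp hρ).PosSemidef :=
  one_sub_posSemidef (supp_conjTranspose hρ) (supp_idem hρ)

/-- Decomposition of a matrix `C` with `Cᴴ C = ρ` as `V √ρ`. -/
lemma decomp {m : Type*} [Fintype m] {C : Matrix m n ℂ} {ρ : Matrix n n ℂ} (hρ : ρ.PosSemidef)
    (hC : Cᴴ * C = ρ) :
    ∃ V : Matrix m n ℂ, V * hρ.sqrt = C ∧ Vᴴ * V = supp hρ ∧ V * supp hρ = V := by
  have hCsupp : C * supp hρ = C := by
    have expand : (C * supp hρ - C)ᴴ * (C * supp hρ - C) =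
        supp hρ * (Cᴴ * C) * supp hρ - supp hρ * (Cᴴ * C) - Cᴴ * C * supp hρ + Cᴴ * C := by
      rw [conjTranspose_sub, conjTranspose_mul, supp_conjTranspose]
      rw [Matrix.sub_mul, Matrix.mul_sub, Matrix.mul_sub,
        ← Matrix.mul_assoc (supp hρ * Cᴴ) C (supp hρ),
        Matrix.mul_assoc (supp hρ) Cᴴ C,
        ← Matrix.mul_assoc Cᴴ C (supp hρ)]
      abel
    have h0 : (C * supp hρ - C)ᴴ * (C * supp hρ - C) = 0 := by
      rw [expand, hC, supp_mul_rho, rho_mul_supp]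
      abel
    have := conjTranspose_mul_self_eq_zero.mp h0
    rwa [sub_eq_zero] at this
  refine ⟨C * pinvSqrt hρ, ?_, ?_, ?_⟩
  · rw [Matrix.mul_assoc, pinvSqrt_mul_sqrt, hCsupp]
  · rw [conjTranspose_mul, pinvSqrt_conjTranspose, Matrix.mul_assoc, ← Matrix.mul_assoc Cᴴ C,
      hC, ← Matrix.mul_assoc, pinvSqrt_mul_rho_mul_pinvSqrt]
  · rw [Matrix.mul_assoc, pinvSqrt_mul_supp]

lemma diag_re_nonneg {P : Matrix n n ℂ} (hP : P.PosSemidef) (i : n) : 0 ≤ (P i i).re := by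
  have h : (0 : ℂ) ≤ P i i := by
    exact hP.diag_nonneg
  simpa using (Complex.le_def.mp h).1

lemma trace_re_nonneg {P : Matrix n n ℂ} (hP : P.PosSemidef) : 0 ≤ P.trace.re := by
  rw [Matrix.trace, Complex.re_sum]
  exact Finset.sum_nonneg fun i _ => diag_re_nonneg hP i

/-- Cauchy–Schwarz for the Frobenius inner product. -/
lemma trace_cs {m p : Type*} [Fintype m] [Fintype p] (X Y : Matrix m p ℂ) :
    ‖(Xᴴ * Y).trace‖ ^ 2 ≤ ((Xᴴ * X).trace).re * ((Yᴴ * Y).trace).re := by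
  let x : EuclideanSpace ℂ (m × p) := WithLp.toLp 2 (fun q => X q.1 q.2)
  let y : EuclideanSpace ℂ (m × p) := WithLp.toLp 2 (fun q => Y q.1 q.2)
  have key : ∀ (A B : Matrix m p ℂ),
      (Aᴴ * B).trace = ∑ q : m × p, (starRingEnd ℂ) (A q.1 q.2) * B q.1 q.2 := by
    intro A B
    rw [Matrix.trace, Fintype.sum_prod_type]
    rw [Finset.sum_comm]
    refine Finset.sum_congr rfl fun j _ => ?_
    simp [Matrix.diag, Matrix.mul_apply, Matrix.conjTranspose_apply]
  have hxy : (inner ℂ x y : ℂ) = (Xᴴ * Y).trace := by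
    rw [key]
    simp [x, y, PiLp.inner_apply, RCLike.inner_apply]
    exact Finset.sum_congr rfl fun _ _ => mul_comm _ _
  have hxx : (inner ℂ x x : ℂ) = (Xᴴ * X).trace := by
    rw [key, PiLp.inner_apply]
    simp only [x, RCLike.inner_apply, PiLp.toLp_apply]
    exact Finset.sum_congr rfl fun _ _ => mul_comm _ _
  have hyy : (inner ℂ y y : ℂ) = (Yᴴ * Y).trace := by
    rw [key, PiLp.inner_apply]
    simp only [y, RCLike.inner_apply, PiLp.toLp_apply]
    exact Finset.sum_congr rfl fun _ _ => mul_comm _ _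
  have h1 : ‖(Xᴴ * Y).trace‖ ≤ ‖x‖ * ‖y‖ := by
    have := norm_inner_le_norm (𝕜 := ℂ) x y
    rw [hxy] at this
    simpa using this
  have h2 : ‖(Xᴴ * Y).trace‖ ^ 2 ≤ (‖x‖ * ‖y‖) ^ 2 := by
    have := norm_nonneg ((Xᴴ * Y).trace)
    nlinarith
  calc ‖(Xᴴ * Y).trace‖ ^ 2 ≤ (‖x‖ * ‖y‖) ^ 2 := h2
    _ = ‖x‖ ^ 2 * ‖y‖ ^ 2 := by ring
    _ = ((Xᴴ * X).trace).re * ((Yᴴ * Y).trace).re := by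
        rw [← inner_self_eq_norm_sq (𝕜 := ℂ) x, ← inner_self_eq_norm_sq (𝕜 := ℂ) y, hxx, hyy]
        rfl

/-- Key trace inequality: for `P` psd and `C` a contraction, `|Tr(C P)| ≤ Tr P`. -/
lemma trace_mul_psd_le {P C : Matrix n n ℂ} (hP : P.PosSemidef) (hC : (1 - Cᴴ * C).PosSemidef) :
    ‖(C * P).trace‖ ^ 2 ≤ (P.trace.re) ^ 2 := by
  set S := hP.sqrt with hSdef
  have hS2 : S * S = P := hP.sqrt_mul_self
  have hSH : Sᴴ = S := hP.posSemidef_sqrt.isHermitian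
  have htr : (C * P).trace = (Sᴴ * (C * S)).trace := by
    rw [hSH, ← hS2, ← Matrix.mul_assoc, trace_mul_comm]
  have hcs := trace_cs S (C * S)
  rw [← htr] at hcs
  have hSS : (Sᴴ * S).trace = P.trace := by rw [hSH, hS2]
  have hY : ((C * S)ᴴ * (C * S)).trace.re ≤ P.trace.re := by
    have hexp : S * (1 - Cᴴ * C) * S = P - (C * S)ᴴ * (C * S) := by
      rw [conjTranspose_mul, hSH, ← hS2]
      noncomm_ring
    have hpsd : (S * (1 - Cᴴ * C) * S).PosSemidef := by
      have := hC.mul_mul_conjTranspose_same S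
      rwa [hSH] at this
    rw [hexp] at hpsd
    have h0 := trace_re_nonneg hpsd
    rw [Matrix.trace_sub, Complex.sub_re] at h0
    linarith
  have hPre : 0 ≤ P.trace.re := trace_re_nonneg hP
  calc ‖(C * P).trace‖ ^ 2 ≤ ((Sᴴ * S).trace).re * (((C * S)ᴴ * (C * S)).trace).re :=
        hcs
    _ ≤ P.trace.re * P.trace.re := by
        rw [hSS]
        exact mul_le_mul_of_nonneg_left hY hPre
    _ = P.trace.re ^ 2 := by ring

section Sigma

variable {μ μ' : n → ℝ}

/-- partial permutation matrix carrying the zero set of `μ` to the zero set of `μ'`. -/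
noncomputable def sigma (e : {i // μ i = 0} ≃ {i // μ' i = 0}) : Matrix n n ℂ :=
  Matrix.of fun i j =>
    if h : μ j = 0 then (if i = ((e ⟨j, h⟩ : {i // μ' i = 0}) : n) then 1 else 0) else 0

lemma sigma_conjTranspose (e : {i // μ i = 0} ≃ {i // μ' i = 0}) :
    (sigma e)ᴴ = sigma e.symm := by
  ext j i
  simp only [conjTranspose_apply, sigma, of_apply]
  by_cases hj : μ j = 0 <;> by_cases hi : μ' i = 0
  · rw [dif_pos hj, dif_pos hi]
    have hiff : (i = ((e ⟨j, hj⟩ : {i // μ' i = 0}) : n)) ↔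
        (j = ((e.symm ⟨i, hi⟩ : {i // μ i = 0}) : n)) := by
      constructor
      · intro h
        have : (⟨i, hi⟩ : {i // μ' i = 0}) = e ⟨j, hj⟩ := Subtype.ext h
        rw [this, Equiv.symm_apply_apply]
      · intro h
        have : (⟨j, hj⟩ : {i // μ i = 0}) = e.symm ⟨i, hi⟩ := Subtype.ext h
        rw [this, Equiv.apply_symm_apply]
    by_cases h : i = ((e ⟨j, hj⟩ : {i // μ' i = 0}) : n)
    · rw [if_pos h, if_pos (hiff.mp h)]
      simp
    · rw [if_neg h, if_neg (fun hc => h (hiff.mpr hc))]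
      simp
  · rw [dif_pos hj, dif_neg hi]
    have : i ≠ ((e ⟨j, hj⟩ : {i // μ' i = 0}) : n) := fun hc => hi (hc ▸ (e ⟨j, hj⟩).prop)
    rw [if_neg this]
    simp
  · rw [dif_neg hj, dif_pos hi]
    have : j ≠ ((e.symm ⟨i, hi⟩ : {i // μ i = 0}) : n) :=
      fun hc => hj (hc ▸ (e.symm ⟨i, hi⟩).prop)
    rw [if_neg this]
    simp
  · rw [dif_neg hj, dif_neg hi]
    simp

lemma sigma_conjTranspose_mul_self (e : {i // μ i = 0} ≃ {i // μ' i = 0}) :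
    (sigma e)ᴴ * sigma e = diagonal (fun j => if μ j = 0 then (1 : ℂ) else 0) := by
  ext j k
  simp only [mul_apply, conjTranspose_apply, sigma, of_apply, diagonal_apply]
  by_cases hj : μ j = 0 <;> by_cases hk : μ k = 0
  · simp only [dif_pos hj, dif_pos hk]
    have hsum : ∀ i, star (if i = ((e ⟨j, hj⟩ : {i // μ' i = 0}) : n) then (1:ℂ) else 0) *
        (if i = ((e ⟨k, hk⟩ : {i // μ' i = 0}) : n) then 1 else 0) =
        if i = ((e ⟨j, hj⟩ : {i // μ' i = 0}) : n) then
          (if i = ((e ⟨k, hk⟩ : {i // μ' i = 0}) : n) then 1 else 0) else 0 := by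
      intro i
      by_cases h : i = ((e ⟨j, hj⟩ : {i // μ' i = 0}) : n) <;> simp [h]
    rw [Finset.sum_congr rfl fun i _ => hsum i, Finset.sum_ite_eq']
    simp only [Finset.mem_univ, if_true]
    have hiff : (((e ⟨j, hj⟩ : {i // μ' i = 0}) : n) = ((e ⟨k, hk⟩ : {i // μ' i = 0}) : n)) ↔
        j = k := by
      rw [Subtype.coe_inj, e.apply_eq_iff_eq, Subtype.mk_eq_mk]
    by_cases h : j = k
    · rw [if_pos (hiff.mpr h), if_pos h, if_pos hj]
    · rw [if_neg (fun hc => h (hiff.mp hc)), if_neg h]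
  · have : ∀ i, star (if h : μ j = 0 then
        (if i = ((e ⟨j, h⟩ : {i // μ' i = 0}) : n) then (1:ℂ) else 0) else 0) *
        (if h : μ k = 0 then (if i = ((e ⟨k, h⟩ : {i // μ' i = 0}) : n) then 1 else 0) else 0)
        = 0 := by
      intro i
      rw [dif_neg hk, mul_zero]
    rw [Finset.sum_congr rfl fun i _ => this i, Finset.sum_const_zero]
    rw [if_neg (fun hc : j = k => hk (hc ▸ hj))]
  · have : ∀ i, star (if h : μ j = 0 then
        (if i = ((e ⟨j, h⟩ : {i // μ' i = 0}) : n) then (1:ℂ) else 0) else 0) *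
        (if h : μ k = 0 then (if i = ((e ⟨k, h⟩ : {i // μ' i = 0}) : n) then 1 else 0) else 0)
        = 0 := by
      intro i
      rw [dif_neg hj, star_zero, zero_mul]
    rw [Finset.sum_congr rfl fun i _ => this i, Finset.sum_const_zero]
    rw [if_neg (fun hc : j = k => hj (hc ▸ hk))]
  · have : ∀ i, star (if h : μ j = 0 then
        (if i = ((e ⟨j, h⟩ : {i // μ' i = 0}) : n) then (1:ℂ) else 0) else 0) *
        (if h : μ k = 0 then (if i = ((e ⟨k, h⟩ : {i // μ' i = 0}) : n) then 1 else 0) else 0)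
        = 0 := by
      intro i
      rw [dif_neg hj, star_zero, zero_mul]
    rw [Finset.sum_congr rfl fun i _ => this i, Finset.sum_const_zero]
    by_cases h : j = k
    · rw [if_pos h, if_neg hj]
    · rw [if_neg h]

lemma sigma_mul_diagonal (e : {i // μ i = 0} ≃ {i // μ' i = 0}) :
    sigma e * diagonal (fun j => (μ j : ℂ)) = 0 := by
  ext i j
  rw [mul_diagonal]
  simp only [sigma, of_apply, Matrix.zero_apply]
  by_cases hj : μ j = 0
  · simp [hj]
  · rw [dif_neg hj, zero_mul]

lemma diagonal_mul_sigma (e : {i // μ i = 0} ≃ {i // μ' i = 0}) :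
    diagonal (fun i => (μ' i : ℂ)) * sigma e = 0 := by
  ext i j
  rw [diagonal_mul]
  simp only [sigma, of_apply, Matrix.zero_apply]
  by_cases hj : μ j = 0
  · rw [dif_pos hj]
    by_cases h : i = ((e ⟨j, hj⟩ : {i // μ' i = 0}) : n)
    · rw [if_pos h, h, (e ⟨j, hj⟩).prop]
      simp
    · rw [if_neg h, mul_zero]
  · rw [dif_neg hj, mul_zero]

end Sigma

lemma idem_eigenvalues {Q : Matrix n n ℂ} (hQpsd : Q.PosSemidef) (hQ : Q * Q = Q) (i : n) :
    hQpsd.1.eigenvalues i = 0 ∨ hQpsd.1.eigenvalues i = 1 := by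
  have hH : Q.IsHermitian := hQpsd.1
  have hd : star (hH.eigenvectorUnitary : Matrix n n ℂ) * Q * (hH.eigenvectorUnitary : Matrix n n ℂ) =
      diagonal (RCLike.ofReal ∘ hH.eigenvalues) := by
    have hEu : star (hH.eigenvectorUnitary : Matrix n n ℂ) * (hH.eigenvectorUnitary : Matrix n n ℂ) = 1 :=
      hH.eigenvectorUnitary.prop.1
    have h := congrArg (fun X => star (hH.eigenvectorUnitary : Matrix n n ℂ) * X *
      (hH.eigenvectorUnitary : Matrix n n ℂ)) (spec_eq hH)
    rw [h]
    simp only [Matrix.mul_assoc]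
    rw [hEu, Matrix.mul_one, ← Matrix.mul_assoc, hEu, Matrix.one_mul]
  have hE : (hH.eigenvectorUnitary : Matrix n n ℂ) * star hH.eigenvectorUnitary = 1 :=
    hH.eigenvectorUnitary.prop.2
  have hsq : (star (hH.eigenvectorUnitary : Matrix n n ℂ) * Q * hH.eigenvectorUnitary) *
      (star (hH.eigenvectorUnitary : Matrix n n ℂ) * Q * hH.eigenvectorUnitary)
      = star (hH.eigenvectorUnitary : Matrix n n ℂ) * Q * hH.eigenvectorUnitary := by
    calc (star (hH.eigenvectorUnitary : Matrix n n ℂ) * Q * hH.eigenvectorUnitary) *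
          (star (hH.eigenvectorUnitary : Matrix n n ℂ) * Q * hH.eigenvectorUnitary)
        = star (hH.eigenvectorUnitary : Matrix n n ℂ) * Q *
          ((hH.eigenvectorUnitary : Matrix n n ℂ) * star hH.eigenvectorUnitary) * Q *
          hH.eigenvectorUnitary := by noncomm_ring
      _ = star (hH.eigenvectorUnitary : Matrix n n ℂ) * (Q * Q) * hH.eigenvectorUnitary := by
          rw [hE]; noncomm_ring
      _ = _ := by rw [hQ]
  rw [hd, diagonal_mul_diagonal] at hsq
  have hent := congrFun (congrFun hsq i) i
  simp only [diagonal_apply_eq, Function.comp_apply] at hent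
  have : hQpsd.1.eigenvalues i * hQpsd.1.eigenvalues i = hQpsd.1.eigenvalues i := by
    exact_mod_cast hent
  exact IsIdempotentElem.iff_eq_zero_or_one.mp this

lemma trace_eq_sum_eigenvalues {Q : Matrix n n ℂ} (hH : Q.IsHermitian) :
    Q.trace = ∑ i, (hH.eigenvalues i : ℂ) := by
  conv_lhs => rw [spec_eq hH]
  rw [trace_mul_cycle, hH.eigenvectorUnitary.prop.1, one_mul, trace_diagonal]
  simp [Function.comp]

lemma card_zero_eigen {μ : n → ℝ} (hμ : ∀ i, μ i = 0 ∨ μ i = 1) :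
    (Fintype.card {i // μ i = 0} : ℝ) = Fintype.card n - ∑ i, μ i := by
  have h1 : ∀ i, (if μ i = 0 then (1:ℝ) else 0) = 1 - μ i := by
    intro i
    rcases hμ i with h | h <;> simp [h]
  have h2 : ((Fintype.card {i // μ i = 0} : ℝ)) = ∑ i, (if μ i = 0 then (1:ℝ) else 0) := by
    rw [Fintype.card_subtype]
    rw [Finset.sum_boole]
  rw [h2, Finset.sum_congr rfl fun i _ => h1 i, Finset.sum_sub_distrib]
  simp [Finset.card_univ]

/-- Any partial isometry (`Vᴴ V` idempotent) extends to a unitary. -/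
lemma unitary_extension {V : Matrix n n ℂ} (hidem : (Vᴴ * V) * (Vᴴ * V) = Vᴴ * V) :
    ∃ U : Matrix n n ℂ, Uᴴ * U = 1 ∧ U * Uᴴ = 1 ∧ Vᴴ * U = Vᴴ * V ∧
      (U - V) * (Vᴴ * V) = 0 := by
  have hPi_psd : (Vᴴ * V).PosSemidef := posSemidef_conjTranspose_mul_self V
  have hPi'_psd : (V * Vᴴ).PosSemidef := posSemidef_self_mul_conjTranspose V
  -- V * (Vᴴ V) = V
  have hVP : V * (Vᴴ * V) = V := by
    have h0 : (V * (Vᴴ * V) - V)ᴴ * (V * (Vᴴ * V) - V) = 0 := by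
      have hexp : (V * (Vᴴ * V) - V)ᴴ * (V * (Vᴴ * V) - V) =
          (Vᴴ * V) * ((Vᴴ * V) * (Vᴴ * V)) - (Vᴴ * V) * (Vᴴ * V) -
            (Vᴴ * V) * (Vᴴ * V) + Vᴴ * V := by
        rw [conjTranspose_sub, conjTranspose_mul, conjTranspose_mul, conjTranspose_conjTranspose]
        noncomm_ring
      rw [hexp, hidem, hidem]
      abel
    have := conjTranspose_mul_self_eq_zero.mp h0
    rwa [sub_eq_zero] at this
  have hP'V : (V * Vᴴ) * V = V := by
    rw [Matrix.mul_assoc, hVP]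
  have hidem' : (V * Vᴴ) * (V * Vᴴ) = V * Vᴴ := by
    rw [← Matrix.mul_assoc, hP'V]
  -- eigen data
  set μ : n → ℝ := hPi_psd.1.eigenvalues with hμdef
  set μ' : n → ℝ := hPi'_psd.1.eigenvalues with hμ'def
  have hμ01 : ∀ i, μ i = 0 ∨ μ i = 1 := idem_eigenvalues hPi_psd hidem
  have hμ'01 : ∀ i, μ' i = 0 ∨ μ' i = 1 := idem_eigenvalues hPi'_psd hidem'
  -- cardinalities agree
  have htr : (Vᴴ * V).trace = (V * Vᴴ).trace := trace_mul_comm _ _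
  have hsum : ∑ i, μ i = ∑ i, μ' i := by
    have h1 := trace_eq_sum_eigenvalues hPi_psd.1
    have h2 := trace_eq_sum_eigenvalues hPi'_psd.1
    rw [h1, h2] at htr
    exact_mod_cast htr
  have hcard : Fintype.card {i // μ i = 0} = Fintype.card {i // μ' i = 0} := by
    have hr : (Fintype.card {i // μ i = 0} : ℝ) = (Fintype.card {i // μ' i = 0} : ℝ) := by
      rw [card_zero_eigen hμ01, card_zero_eigen hμ'01, hsum]
    exact_mod_cast hr
  let e : {i // μ i = 0} ≃ {i // μ' i = 0} := Fintype.equivOfCardEq hcard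
  -- the bridging matrix Y
  set E : Matrix n n ℂ := (hPi_psd.1.eigenvectorUnitary : Matrix n n ℂ) with hEdef
  set E' : Matrix n n ℂ := (hPi'_psd.1.eigenvectorUnitary : Matrix n n ℂ) with hE'def
  have hEu : star E * E = 1 := hPi_psd.1.eigenvectorUnitary.prop.1
  have hEu' : E * star E = 1 := hPi_psd.1.eigenvectorUnitary.prop.2
  have hE'u : star E' * E' = 1 := hPi'_psd.1.eigenvectorUnitary.prop.1
  have hE'u' : E' * star E' = 1 := hPi'_psd.1.eigenvectorUnitary.prop.2
  -- convert star to ᴴ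
  have hEuH : Eᴴ * E = 1 := by rw [← star_eq_conjTranspose]; exact hEu
  have hEu'H : E * Eᴴ = 1 := by rw [← star_eq_conjTranspose]; exact hEu'
  have hE'uH : E'ᴴ * E' = 1 := by rw [← star_eq_conjTranspose]; exact hE'u
  have hE'u'H : E' * E'ᴴ = 1 := by rw [← star_eq_conjTranspose]; exact hE'u'
  set D : Matrix n n ℂ := diagonal (fun j => (μ j : ℂ)) with hDdef
  set D' : Matrix n n ℂ := diagonal (fun i => (μ' i : ℂ)) with hD'def
  have hfun : (RCLike.ofReal ∘ μ : n → ℂ) = fun j => (μ j : ℂ) := rfl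
  have hfun' : (RCLike.ofReal ∘ μ' : n → ℂ) = fun i => (μ' i : ℂ) := rfl
  have hspecH : Vᴴ * V = E * D * Eᴴ := by
    have h := spec_eq hPi_psd.1
    rwa [hfun, star_eq_conjTranspose] at h
  have hspec'H : V * Vᴴ = E' * D' * E'ᴴ := by
    have h := spec_eq hPi'_psd.1
    rwa [hfun', star_eq_conjTranspose] at h
  -- the bridging matrix Y
  set Y : Matrix n n ℂ := E' * sigma e * Eᴴ with hYdef
  have hYH : Yᴴ = E * (sigma e)ᴴ * E'ᴴ := by
    rw [hYdef, conjTranspose_mul, conjTranspose_mul, conjTranspose_conjTranspose,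
      Matrix.mul_assoc]
  have hsig1 : (sigma e)ᴴ * sigma e = diagonal (fun j => if μ j = 0 then (1:ℂ) else 0) :=
    sigma_conjTranspose_mul_self e
  have hsig2 : sigma e * (sigma e)ᴴ = diagonal (fun i => if μ' i = 0 then (1:ℂ) else 0) := by
    have h1 : (sigma e.symm)ᴴ = sigma e := by rw [sigma_conjTranspose, Equiv.symm_symm]
    rw [sigma_conjTranspose, ← h1, sigma_conjTranspose_mul_self]
  have hDχ : diagonal (fun j => if μ j = 0 then (1:ℂ) else 0) = 1 - D := by
    rw [hDdef]
    ext i j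
    rcases eq_or_ne i j with rfl | hne
    · rcases hμ01 i with h0 | h0 <;> simp [Matrix.sub_apply, Matrix.one_apply, h0]
    · simp [Matrix.sub_apply, Matrix.one_apply, hne, diagonal_apply_ne _ hne]
  have hD'χ : diagonal (fun i => if μ' i = 0 then (1:ℂ) else 0) = 1 - D' := by
    rw [hD'def]
    ext i j
    rcases eq_or_ne i j with rfl | hne
    · rcases hμ'01 i with h0 | h0 <;> simp [Matrix.sub_apply, Matrix.one_apply, h0]
    · simp [Matrix.sub_apply, Matrix.one_apply, hne, diagonal_apply_ne _ hne]
  -- products with Y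
  have hYY : Yᴴ * Y = 1 - Vᴴ * V := by
    calc Yᴴ * Y = E * ((sigma e)ᴴ * (E'ᴴ * E') * sigma e) * Eᴴ := by
          rw [hYH, hYdef]; noncomm_ring
      _ = E * ((sigma e)ᴴ * sigma e) * Eᴴ := by rw [hE'uH, Matrix.mul_one]
      _ = E * (1 - D) * Eᴴ := by rw [hsig1, hDχ]
      _ = E * Eᴴ - E * D * Eᴴ := by noncomm_ring
      _ = 1 - Vᴴ * V := by rw [hEu'H, hspecH]
  have hYY' : Y * Yᴴ = 1 - V * Vᴴ := by
    calc Y * Yᴴ = E' * (sigma e * (Eᴴ * E) * (sigma e)ᴴ) * E'ᴴ := by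
          rw [hYH, hYdef]; noncomm_ring
      _ = E' * (sigma e * (sigma e)ᴴ) * E'ᴴ := by rw [hEuH, Matrix.mul_one]
      _ = E' * (1 - D') * E'ᴴ := by rw [hsig2, hD'χ]
      _ = E' * E'ᴴ - E' * D' * E'ᴴ := by noncomm_ring
      _ = 1 - V * Vᴴ := by rw [hE'u'H, hspec'H]
  have hYPi : Y * (Vᴴ * V) = 0 := by
    calc Y * (Vᴴ * V) = E' * (sigma e * (Eᴴ * E) * D) * Eᴴ := by
          rw [hYdef, hspecH]; noncomm_ring
      _ = E' * (sigma e * D) * Eᴴ := by rw [hEuH, Matrix.mul_one]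
      _ = 0 := by rw [hDdef, sigma_mul_diagonal, Matrix.mul_zero, Matrix.zero_mul]
  have hPi'Y : (V * Vᴴ) * Y = 0 := by
    calc (V * Vᴴ) * Y = E' * (D' * (E'ᴴ * E') * sigma e) * Eᴴ := by
          rw [hYdef, hspec'H]; noncomm_ring
      _ = E' * (D' * sigma e) * Eᴴ := by rw [hE'uH, Matrix.mul_one]
      _ = 0 := by rw [hD'def, diagonal_mul_sigma, Matrix.mul_zero, Matrix.zero_mul]
  -- orthogonality of Y and V
  have hVHV : (Vᴴ * V) * Vᴴ = Vᴴ := by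
    have h := congrArg conjTranspose hVP
    rwa [conjTranspose_mul, conjTranspose_mul, conjTranspose_conjTranspose] at h
  have hVHP' : Vᴴ * (V * Vᴴ) = Vᴴ := by
    rw [← Matrix.mul_assoc, hVHV]
  have hVHY : Vᴴ * Y = 0 := by
    rw [← hVHP', Matrix.mul_assoc, hPi'Y, Matrix.mul_zero]
  have hYHV : Yᴴ * V = 0 := by
    have h := congrArg conjTranspose hVHY
    rwa [conjTranspose_mul, conjTranspose_conjTranspose, conjTranspose_zero] at h
  have hYVH : Y * Vᴴ = 0 := by
    rw [← hVHV, ← Matrix.mul_assoc, hYPi, Matrix.zero_mul]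
  have hVYH : V * Yᴴ = 0 := by
    have h := congrArg conjTranspose hYVH
    rwa [conjTranspose_mul, conjTranspose_conjTranspose, conjTranspose_zero] at h
  -- assemble
  refine ⟨V + Y, ?_, ?_, ?_, ?_⟩
  · have : (V + Y)ᴴ * (V + Y) = Vᴴ * V + Vᴴ * Y + Yᴴ * V + Yᴴ * Y := by
      rw [conjTranspose_add]; noncomm_ring
    rw [this, hVHY, hYHV, hYY]
    abel
  · have : (V + Y) * (V + Y)ᴴ = V * Vᴴ + V * Yᴴ + Y * Vᴴ + Y * Yᴴ := by
      rw [conjTranspose_add]; noncomm_ring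
    rw [this, hVYH, hYVH, hYY']
    abel
  · rw [Matrix.mul_add, hVHY, add_zero]
  · rw [add_sub_cancel_left, hYPi]

/-- Polar decomposition: `M = W √(Mᴴ M)` with `W` unitary. -/
lemma polar_decomp (M : Matrix n n ℂ) :
    ∃ W : Matrix n n ℂ, Wᴴ * W = 1 ∧ W * Wᴴ = 1 ∧
      W * (posSemidef_conjTranspose_mul_self M).sqrt = M := by
  have hρ := posSemidef_conjTranspose_mul_self M
  obtain ⟨V, hVs, hVV, hVp⟩ := decomp hρ rfl
  have hidem : (Vᴴ * V) * (Vᴴ * V) = Vᴴ * V := by rw [hVV]; exact supp_idem hρ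
  obtain ⟨U, hU1, hU2, hU3, hU4⟩ := unitary_extension hidem
  refine ⟨U, hU1, hU2, ?_⟩
  have hUV : (U - V) * supp hρ = 0 := by rw [← hVV]; exact hU4
  have hsplit : U * hρ.sqrt = V * hρ.sqrt + (U - V) * hρ.sqrt := by noncomm_ring
  have h2 : (U - V) * hρ.sqrt = 0 := by
    rw [← supp_mul_sqrt hρ, ← Matrix.mul_assoc, hUV, Matrix.zero_mul]
  rw [hsplit, hVs, h2, add_zero]

lemma sqrt_congr {A B : Matrix n n ℂ} (h : A = B) (hA : A.PosSemidef) (hB : B.PosSemidef) :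
    hA.sqrt = hB.sqrt := by
  subst h
  rfl

lemma normSq_trace_of_isHermitian {P : Matrix n n ℂ} (hH : P.IsHermitian) :
    Complex.normSq P.trace = P.trace.re ^ 2 := by
  have him : P.trace.im = 0 := by
    have h := trace_conjTranspose P
    rw [hH] at h
    have := Complex.conj_eq_iff_im.mp h.symm
    exact this
  rw [Complex.normSq_apply, him]
  ring

end UhlmannAux

section Purif

open UhlmannAux

lemma purif_inner {m k : ℕ} (Ψ₁ Ψ₂ : Fin m × Fin k → ℂ) :
    (∑ x, star (Ψ₁ x) * Ψ₂ x) =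
      ((Matrix.of fun i a => star (Ψ₂ (i,a)))ᴴ * (Matrix.of fun i a => star (Ψ₁ (i,a)))).trace := by
  rw [Fintype.sum_prod_type, Finset.sum_comm, Matrix.trace]
  refine Finset.sum_congr rfl fun a _ => ?_
  simp only [Matrix.diag_apply, Matrix.mul_apply, Matrix.conjTranspose_apply, Matrix.of_apply,
    star_star]
  exact Finset.sum_congr rfl fun i _ => mul_comm _ _

lemma purif_gram {m k : ℕ} {Ψ : Fin m × Fin k → ℂ} {ρ : Matrix (Fin k) (Fin k) ℂ}
    (h : IsPurification Ψ ρ) :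
    (Matrix.of fun i a => star (Ψ (i,a)))ᴴ * (Matrix.of fun i a => star (Ψ (i,a))) = ρ := by
  ext a b
  rw [← h.2 a b]
  simp only [Matrix.mul_apply, Matrix.conjTranspose_apply, Matrix.of_apply, star_star,
    Matrix.vecMulVec_apply, Pi.star_apply]

lemma purif_of_gram {k : ℕ} {C : Matrix (Fin k) (Fin k) ℂ} {ρ : Matrix (Fin k) (Fin k) ℂ}
    (hρtr : ρ.trace = 1) (hC : Cᴴ * C = ρ) :
    IsPurification (fun x => star (C x.1 x.2)) ρ := by
  constructor
  · have h1 : ((∑ x : Fin k × Fin k, Complex.normSq (star (C x.1 x.2)) : ℝ) : ℂ) = ρ.trace := by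
      rw [← hC, Matrix.trace]
      push_cast
      rw [Fintype.sum_prod_type, Finset.sum_comm]
      refine Finset.sum_congr rfl fun a _ => ?_
      simp only [Matrix.diag_apply, Matrix.mul_apply, Matrix.conjTranspose_apply]
      refine Finset.sum_congr rfl fun i _ => ?_
      rw [Complex.star_def, Complex.normSq_conj, Complex.normSq_eq_conj_mul_self]
    rw [hρtr] at h1
    exact_mod_cast h1
  · intro a b
    have := congrFun (congrFun hC a) b
    rw [← this]
    simp only [Matrix.mul_apply, Matrix.conjTranspose_apply, Matrix.vecMulVec_apply,
      Pi.star_apply, star_star]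

end Purif

/-- Uhlmann's theorem: `|⟨Ψ₁|Ψ₂⟩|² ≤ F(ρ₁,ρ₂)` for all purifications, and the
maximum over purifications `Ψ₁` of `ρ₁` (with `Ψ₂` fixed) is attained and
equals `F(ρ₁,ρ₂)`. -/
theorem uhlmann {n : ℕ}
    (ρ₁ ρ₂ : Matrix (Fin n) (Fin n) ℂ)
    (h1 : ρ₁.PosSemidef) (h2 : ρ₂.PosSemidef)
    (htr1 : ρ₁.trace = 1) (htr2 : ρ₂.trace = 1) :
    (∀ (m : ℕ) (Ψ₁ Ψ₂ : Fin m × Fin n → ℂ),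
        IsPurification Ψ₁ ρ₁ → IsPurification Ψ₂ ρ₂ →
        Complex.normSq (∑ x, star (Ψ₁ x) * Ψ₂ x) ≤ fidelity h1 h2) ∧
    (∀ Ψ₂ : Fin n × Fin n → ℂ, IsPurification Ψ₂ ρ₂ →
        ∃ Ψ₁ : Fin n × Fin n → ℂ, IsPurification Ψ₁ ρ₁ ∧
          Complex.normSq (∑ x, star (Ψ₁ x) * Ψ₂ x) = fidelity h1 h2) := by
  classical
  have h1H : h1.sqrtᴴ = h1.sqrt := h1.posSemidef_sqrt.isHermitian.eq
  have h2H : h2.sqrtᴴ = h2.sqrt := h2.posSemidef_sqrt.isHermitian.eq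
  set M : Matrix (Fin n) (Fin n) ℂ := h2.sqrt * h1.sqrt with hMdef
  have hMH : Mᴴ = h1.sqrt * h2.sqrt := by
    rw [hMdef, conjTranspose_mul, h1H, h2H]
  have hMM : Mᴴ * M = h1.sqrt * ρ₂ * h1.sqrt := by
    rw [hMH, hMdef]
    calc h1.sqrt * h2.sqrt * (h2.sqrt * h1.sqrt)
        = h1.sqrt * (h2.sqrt * h2.sqrt) * h1.sqrt := by noncomm_ring
      _ = h1.sqrt * ρ₂ * h1.sqrt := by rw [h2.sqrt_mul_self]
  obtain ⟨W, hW1, hW2, hWP⟩ := UhlmannAux.polar_decomp M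
  rw [UhlmannAux.sqrt_congr hMM (posSemidef_conjTranspose_mul_self M)
    (sqrt_mul_mul_sqrt_posSemidef h1 h2)] at hWP
  set P : Matrix (Fin n) (Fin n) ℂ := (sqrt_mul_mul_sqrt_posSemidef h1 h2).sqrt with hPdef
  have hPpsd : P.PosSemidef := (sqrt_mul_mul_sqrt_posSemidef h1 h2).posSemidef_sqrt
  have hPH : Pᴴ = P := hPpsd.isHermitian.eq
  have hMHP : Mᴴ = P * Wᴴ := by rw [← hWP, conjTranspose_mul, hPH]
  have hfid : fidelity h1 h2 = P.trace.re ^ 2 := rfl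
  constructor
  · intro m Ψ₁ Ψ₂ hp1 hp2
    rw [purif_inner Ψ₁ Ψ₂]
    set C₁ : Matrix (Fin m) (Fin n) ℂ := Matrix.of fun i a => star (Ψ₁ (i,a)) with hC1def
    set C₂ : Matrix (Fin m) (Fin n) ℂ := Matrix.of fun i a => star (Ψ₂ (i,a)) with hC2def
    have hC1 : C₁ᴴ * C₁ = ρ₁ := purif_gram hp1
    have hC2 : C₂ᴴ * C₂ = ρ₂ := purif_gram hp2
    obtain ⟨V₁, hV1s, hV1V, hV1p⟩ := UhlmannAux.decomp h1 hC1
    obtain ⟨V₂, hV2s, hV2V, hV2p⟩ := UhlmannAux.decomp h2 hC2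
    set K : Matrix (Fin n) (Fin n) ℂ := V₂ᴴ * V₁ with hKdef
    have htr : (C₂ᴴ * C₁).trace = ((Wᴴ * K) * P).trace := by
      rw [← hV1s, ← hV2s, conjTranspose_mul, h2H]
      rw [Matrix.mul_assoc h2.sqrt V₂ᴴ (V₁ * h1.sqrt), trace_mul_comm]
      rw [← Matrix.mul_assoc V₂ᴴ V₁ h1.sqrt, Matrix.mul_assoc (V₂ᴴ * V₁) h1.sqrt h2.sqrt]
      rw [← hMH, hMHP, ← hKdef, ← Matrix.mul_assoc, trace_mul_comm, ← Matrix.mul_assoc]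
    have hWK : ((1 : Matrix (Fin n) (Fin n) ℂ) - (Wᴴ * K)ᴴ * (Wᴴ * K)).PosSemidef := by
      have hKK : (Wᴴ * K)ᴴ * (Wᴴ * K) = Kᴴ * K := by
        rw [conjTranspose_mul, conjTranspose_conjTranspose, Matrix.mul_assoc,
          ← Matrix.mul_assoc W Wᴴ K, hW2, Matrix.one_mul]
      have hKK2 : Kᴴ * K = V₁ᴴ * (V₂ * V₂ᴴ) * V₁ := by
        rw [hKdef, conjTranspose_mul, conjTranspose_conjTranspose,
          Matrix.mul_assoc V₁ᴴ V₂ (V₂ᴴ * V₁), ← Matrix.mul_assoc V₂ V₂ᴴ V₁,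
          ← Matrix.mul_assoc V₁ᴴ (V₂ * V₂ᴴ) V₁]
      have hsupp2T : UhlmannAux.supp h2 * V₂ᴴ = V₂ᴴ := by
        have hh := congrArg conjTranspose hV2p
        rwa [conjTranspose_mul, UhlmannAux.supp_conjTranspose] at hh
      have hQ2idem : (V₂ * V₂ᴴ) * (V₂ * V₂ᴴ) = V₂ * V₂ᴴ := by
        rw [Matrix.mul_assoc V₂ V₂ᴴ (V₂ * V₂ᴴ), ← Matrix.mul_assoc V₂ᴴ V₂ V₂ᴴ, hV2V, hsupp2T]
      have hQ2H : (V₂ * V₂ᴴ)ᴴ = V₂ * V₂ᴴ := by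
        rw [conjTranspose_mul, conjTranspose_conjTranspose]
      have hQ2 := UhlmannAux.one_sub_posSemidef hQ2H hQ2idem
      have hQ1 : ((1 : Matrix (Fin n) (Fin n) ℂ) - V₁ᴴ * V₁).PosSemidef := by
        rw [hV1V]
        exact UhlmannAux.one_sub_supp_posSemidef h1
      have hdecomp : (1 : Matrix (Fin n) (Fin n) ℂ) - (Wᴴ * K)ᴴ * (Wᴴ * K) =
          ((1 : Matrix (Fin n) (Fin n) ℂ) - V₁ᴴ * V₁) + V₁ᴴ * (1 - V₂ * V₂ᴴ) * V₁ := by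
        rw [hKK, hKK2, Matrix.mul_sub, Matrix.mul_one, Matrix.sub_mul]
        abel
      rw [hdecomp]
      exact hQ1.add (hQ2.conjTranspose_mul_mul_same V₁)
    have hb := UhlmannAux.trace_mul_psd_le hPpsd hWK
    rw [← Complex.sq_norm, htr, hfid]
    exact hb
  · intro Ψ₂ hp2
    obtain ⟨V₂, hV2s, hV2V, hV2p⟩ := UhlmannAux.decomp h2 (purif_gram hp2)
    have hidem : (V₂ᴴ * V₂) * (V₂ᴴ * V₂) = V₂ᴴ * V₂ := by
      rw [hV2V]
      exact UhlmannAux.supp_idem h2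
    obtain ⟨U₂, hU1, hU2, hU3, hU4⟩ := UhlmannAux.unitary_extension hidem
    set C₁ : Matrix (Fin n) (Fin n) ℂ := U₂ * W * h1.sqrt with hC1def
    have hC1 : C₁ᴴ * C₁ = ρ₁ := by
      calc C₁ᴴ * C₁ = h1.sqrtᴴ * (Wᴴ * (U₂ᴴ * U₂) * W) * h1.sqrt := by
            rw [hC1def, conjTranspose_mul, conjTranspose_mul]
            noncomm_ring
        _ = h1.sqrtᴴ * (Wᴴ * W) * h1.sqrt := by rw [hU1, Matrix.mul_one]
        _ = ρ₁ := by rw [hW1, Matrix.mul_one, h1H, h1.sqrt_mul_self]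
    refine ⟨fun x => star (C₁ x.1 x.2), purif_of_gram htr1 hC1, ?_⟩
    have hfold : (Matrix.of fun i a => star ((fun (x : Fin n × Fin n) => star (C₁ x.1 x.2)) (i,a)))
        = C₁ := by
      ext i a
      simp
    rw [purif_inner, hfold, ← hV2s]
    have hval : ((V₂ * h2.sqrt)ᴴ * C₁).trace = P.trace := by
      rw [hC1def, conjTranspose_mul, h2H]
      have e1 : (h2.sqrt * V₂ᴴ) * (U₂ * W * h1.sqrt) =
          h2.sqrt * (V₂ᴴ * U₂) * W * h1.sqrt := by noncomm_ring
      rw [e1, hU3, hV2V, UhlmannAux.sqrt_mul_supp]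
      rw [trace_mul_cycle, ← hMH, hMHP, Matrix.mul_assoc, hW1, Matrix.mul_one]
    rw [hval, hfid]
    exact UhlmannAux.normSq_trace_of_isHermitian hPpsd.isHermitian
end

section
/- (Lindblad inequality) Let Φ(ρ) = ∑ᵢ Kᵢ ρ Kᵢ† be a quantum channel with ∑ᵢ Kᵢ†Kᵢ = I, ρ a density matrix, ρ' = Φ(ρ), and σ the matrix with entries σ_{ij} = Tr(Kᵢ ρ Kⱼ†). Then |S(ρ') − S(ρ)| ≤ S(σ) ≤ S(ρ') + S(ρ). -/
open Matrix
open scoped ComplexOrder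

open Polynomial
open scoped Kronecker
set_option maxHeartbeats 1000000
set_option linter.unusedSectionVars false

section Aux
variable {R : Type*} [CommRing R]

variable {R : Type*} [CommRing R]
theorem charpoly_diag (n : Type*) [Fintype n] [DecidableEq n] (d : n → R) :
    (diagonal d).charpoly = ∏ i, (X - C (d i)) := by
  rw [charpoly, charmatrix, RingHom.mapMatrix_apply, diagonal_map (map_zero C),
    scalar_apply, diagonal_sub, det_diagonal]

theorem charpoly_conj {n : Type*} [Fintype n] [DecidableEq n] (P : (Matrix n n R)ˣ)
    (M : Matrix n n R) : ((P : Matrix n n R) * M * (↑P⁻¹ : Matrix n n R)).charpoly = M.charpoly := by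
  have h1 : ∀ N : Matrix n n R, charmatrix N = scalar n X - N.map C := fun N => rfl
  have hc : ∀ A : Matrix n n R[X], A * scalar n X = scalar n X * A :=
    fun A => (Matrix.scalar_commute X (Commute.all X) A).symm
  have key : charmatrix ((P : Matrix n n R) * M * (↑P⁻¹ : Matrix n n R))
      = (P : Matrix n n R).map C * charmatrix M * (↑P⁻¹ : Matrix n n R).map C := by
    rw [h1, h1, mul_sub, sub_mul]
    congr 1
    · rw [hc, mul_assoc, ← Matrix.map_mul]
      simp [Units.mul_inv]
    · rw [← Matrix.map_mul, ← Matrix.map_mul]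
  have hPP : ((P : Matrix n n R).map C).det * ((↑P⁻¹ : Matrix n n R).map C).det = 1 := by
    rw [← det_mul, ← Matrix.map_mul]
    simp [Units.mul_inv]
  rw [charpoly, charpoly, key, det_mul, det_mul, mul_comm ((P : Matrix n n R).map C).det,
    mul_assoc, hPP, mul_one]

theorem charpoly_zero' (n : Type*) [Fintype n] [DecidableEq n] :
    (0 : Matrix n n R).charpoly = X ^ (Fintype.card n) := by
  have := charpoly_diag (R := R) n (fun _ => 0)
  rw [diagonal_zero] at this
  simpa [Finset.prod_const, Finset.card_univ] using this

theorem charpoly_mul_comm_rect {m n : Type*} [Fintype m] [Fintype n] [DecidableEq m]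
    [DecidableEq n] (A : Matrix m n R) (B : Matrix n m R) :
    (A * B).charpoly * X ^ (Fintype.card n) = (B * A).charpoly * X ^ (Fintype.card m) := by
  have hQ : (fromBlocks 1 A 0 1 : Matrix (m ⊕ n) (m ⊕ n) R) * fromBlocks 1 (-A) 0 1 = 1 := by
    simp [fromBlocks_multiply, ← fromBlocks_one]
  have hQ' : (fromBlocks 1 (-A) 0 1 : Matrix (m ⊕ n) (m ⊕ n) R) * fromBlocks 1 A 0 1 = 1 := by
    simp [fromBlocks_multiply, ← fromBlocks_one]
  set Q : (Matrix (m ⊕ n) (m ⊕ n) R)ˣ := ⟨fromBlocks 1 A 0 1, fromBlocks 1 (-A) 0 1, hQ, hQ'⟩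
  have hconj : (fromBlocks (A * B) 0 B 0 : Matrix (m ⊕ n) (m ⊕ n) R)
      = (Q : Matrix (m ⊕ n) (m ⊕ n) R) * fromBlocks 0 0 B (B * A) * (↑Q⁻¹ : Matrix _ _ R) := by
    have : (Q : Matrix (m ⊕ n) (m ⊕ n) R) * fromBlocks 0 0 B (B * A)
        = fromBlocks (A * B) 0 B 0 * (Q : Matrix (m ⊕ n) (m ⊕ n) R) := by
      simp [Q, fromBlocks_multiply, Matrix.mul_assoc]
    rw [this, Matrix.mul_assoc]
    simp [Q, hQ]
  have := charpoly_conj Q (fromBlocks 0 0 B (B * A))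
  rw [← hconj] at this
  rw [charpoly_fromBlocks_zero₁₂, charpoly_fromBlocks_zero₁₂, charpoly_zero', charpoly_zero']
    at this
  rw [this, mul_comm]

theorem charpoly_of_hermitian {n : Type*} [Fintype n] [DecidableEq n] {A : Matrix n n ℂ}
    (hA : A.IsHermitian) : A.charpoly = ∏ i, (X - C ((hA.eigenvalues i : ℂ))) := by
  set U : Matrix n n ℂ := (hA.eigenvectorUnitary : Matrix n n ℂ) with hU
  have h1 : U * star U = 1 := (Matrix.mem_unitaryGroup_iff).mp hA.eigenvectorUnitary.2
  have h2 : star U * U = 1 := (Matrix.mem_unitaryGroup_iff').mp hA.eigenvectorUnitary.2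
  set P : (Matrix n n ℂ)ˣ := ⟨U, star U, h1, h2⟩
  have hsp : A = (P : Matrix n n ℂ) * diagonal (RCLike.ofReal ∘ hA.eigenvalues)
      * (↑P⁻¹ : Matrix n n ℂ) := hA.spectral_theorem
  have hc := congrArg Matrix.charpoly hsp
  rw [hc, charpoly_conj, charpoly_diag]
  rfl

theorem sum_f_eigs_eq {m n : Type*} [Fintype m] [Fintype n] [DecidableEq m] [DecidableEq n]
    {A : Matrix m m ℂ} {B : Matrix n n ℂ} (hA : A.IsHermitian) (hB : B.IsHermitian)
    (f : ℝ → ℝ) (hf : f 0 = 0)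
    (h : A.charpoly * X ^ Fintype.card n = B.charpoly * X ^ Fintype.card m) :
    ∑ i, f (hA.eigenvalues i) = ∑ j, f (hB.eigenvalues j) := by
  have rootsA : A.charpoly.roots = Finset.univ.val.map (fun i => (hA.eigenvalues i : ℂ)) := by
    rw [charpoly_of_hermitian hA]
    rw [show (∏ i, (X - C ((hA.eigenvalues i : ℂ))))
        = ((Finset.univ.val.map (fun i => (hA.eigenvalues i : ℂ))).map
            (fun a => X - C a)).prod by
      rw [Multiset.map_map]; rfl]
    exact roots_multiset_prod_X_sub_C _
  have rootsB : B.charpoly.roots = Finset.univ.val.map (fun j => (hB.eigenvalues j : ℂ)) := by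
    rw [charpoly_of_hermitian hB]
    rw [show (∏ j, (X - C ((hB.eigenvalues j : ℂ))))
        = ((Finset.univ.val.map (fun j => (hB.eigenvalues j : ℂ))).map
            (fun a => X - C a)).prod by
      rw [Multiset.map_map]; rfl]
    exact roots_multiset_prod_X_sub_C _
  have hroots := congrArg Polynomial.roots h
  rw [roots_mul (mul_ne_zero A.charpoly_monic.ne_zero (pow_ne_zero _ X_ne_zero)),
      roots_mul (mul_ne_zero B.charpoly_monic.ne_zero (pow_ne_zero _ X_ne_zero)),
      roots_X_pow, roots_X_pow, rootsA, rootsB] at hroots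
  set g : ℂ → ℝ := fun z => f z.re with hg
  have hsum := congrArg (fun s : Multiset ℂ => (s.map g).sum) hroots
  simp only [Multiset.map_add, Multiset.sum_add, Multiset.map_nsmul, Multiset.map_singleton,
    Multiset.sum_nsmul, Multiset.sum_singleton, Multiset.map_map] at hsum
  have hg0 : g 0 = 0 := by simp [hg, hf]
  rw [hg0] at hsum
  simp only [smul_zero, add_zero] at hsum
  calc ∑ i, f (hA.eigenvalues i)
      = (Finset.univ.val.map (fun i => g ((hA.eigenvalues i : ℂ)))).sum := by
        rw [Finset.sum]; congr 1
    _ = (Finset.univ.val.map (fun j => g ((hB.eigenvalues j : ℂ)))).sum := by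
        simpa using hsum
    _ = ∑ j, f (hB.eigenvalues j) := by
        rw [Finset.sum]; congr 1

theorem klein_core {X T : Type*} [Fintype X] [Fintype T] (m : X → ℝ) (e : T → ℝ)
    (c : X → T → ℝ)
    (hm : ∀ x, 0 ≤ m x) (he : ∀ t, 0 ≤ e t) (hc : ∀ x t, 0 ≤ c x t)
    (hrow : ∀ x, ∑ t, c x t = 1) (hcol : ∀ t, ∑ x, c x t = 1)
    (hsm : ∑ x, m x = 1) (hse : ∑ t, e t = 1)
    (hsupp : ∀ x t, e t = 0 → m x * c x t = 0) :
    ∑ x, ∑ t, c x t * (m x * Real.log (e t)) ≤ ∑ x, m x * Real.log (m x) := by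
  have key : ∀ x t, c x t * (m x - e t)
      ≤ c x t * (m x * Real.log (m x) - m x * Real.log (e t)) := by
    intro x t
    rcases eq_or_lt_of_le (hc x t) with hc0 | hcpos
    · rw [← hc0, zero_mul, zero_mul]
    rcases eq_or_lt_of_le (he t) with he0 | hepos
    · have hme : m x = 0 := by
        have := hsupp x t he0.symm
        rcases mul_eq_zero.mp this with h | h
        · exact h
        · exact absurd h (ne_of_gt hcpos)
      rw [hme, ← he0]
      simp
    rcases eq_or_lt_of_le (hm x) with hm0 | hmpos
    · rw [← hm0]
      simp only [zero_sub, zero_mul, mul_zero, sub_zero]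
      have : c x t * -e t ≤ 0 := by
        apply mul_nonpos_of_nonneg_of_nonpos (hc x t)
        linarith
      simpa using this
    · apply mul_le_mul_of_nonneg_left _ (hc x t)
      have hlog : Real.log (e t / m x) ≤ e t / m x - 1 :=
        Real.log_le_sub_one_of_pos (div_pos hepos hmpos)
      rw [Real.log_div (ne_of_gt hepos) (ne_of_gt hmpos)] at hlog
      have := mul_le_mul_of_nonneg_left hlog (le_of_lt hmpos)
      rw [mul_sub, mul_sub, mul_div_cancel₀ _ (ne_of_gt hmpos), mul_one] at this
      linarith
  have hsum0 : ∑ x, ∑ t, c x t * (m x - e t) = 0 := by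
    have h1 : ∑ x, ∑ t, c x t * m x = 1 := by
      have : ∀ x, ∑ t, c x t * m x = m x := by
        intro x
        rw [← Finset.sum_mul, hrow, one_mul]
      rw [Finset.sum_congr rfl (fun x _ => this x), hsm]
    have h2 : ∑ x, ∑ t, c x t * e t = 1 := by
      rw [Finset.sum_comm]
      have : ∀ t, ∑ x, c x t * e t = e t := by
        intro t
        rw [← Finset.sum_mul, hcol, one_mul]
      rw [Finset.sum_congr rfl (fun t _ => this t), hse]
    simp only [mul_sub, Finset.sum_sub_distrib]
    rw [h1, h2, sub_self]
  have hmain : 0 ≤ ∑ x, ∑ t, (c x t * (m x * Real.log (m x) - m x * Real.log (e t))) := by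
    rw [← hsum0]
    apply Finset.sum_le_sum
    intro x _
    exact Finset.sum_le_sum (fun t _ => key x t)
  have hexp : ∑ x, ∑ t, (c x t * (m x * Real.log (m x) - m x * Real.log (e t)))
      = ∑ x, m x * Real.log (m x) - ∑ x, ∑ t, c x t * (m x * Real.log (e t)) := by
    simp only [mul_sub, Finset.sum_sub_distrib]
    congr 1
    apply Finset.sum_congr rfl
    intro x _
    rw [← Finset.sum_mul, hrow, one_mul]
  linarith


variable {α β : Type*} [Fintype α] [Fintype β] [DecidableEq α] [DecidableEq β]

lemma kron_conjTranspose (V : Matrix α α ℂ) (Y : Matrix β β ℂ) :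
    (V ⊗ₖ Y)ᴴ = Vᴴ ⊗ₖ Yᴴ := by
  ext s t
  simp [conjTranspose_apply, kroneckerMap_apply, star_mul', mul_comm]


lemma delta_sum (Wb : Matrix β β ℂ) (hWb : Wb * Wbᴴ = 1) (j j' : β) :
    ∑ b, star (Wb j b) * Wb j' b = if j' = j then 1 else 0 := by
  have h := congrFun (congrFun hWb j') j
  simp only [mul_apply, conjTranspose_apply, one_apply] at h
  rw [← h]
  exact Finset.sum_congr rfl fun b _ => by ring

lemma pt1 (V : Matrix α α ℂ) (Wb : Matrix β β ℂ) (hWb : Wb * Wbᴴ = 1)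
    (ω : Matrix (α × β) (α × β) ℂ) (a a' : α) :
    ∑ b, ((V ⊗ₖ Wb)ᴴ * ω * (V ⊗ₖ Wb)) (a, b) (a', b)
      = (Vᴴ * (Matrix.of fun i i' => ∑ j, ω (i, j) (i', j)) * V) a a' := by
  set W := V ⊗ₖ Wb with hW
  have lhs_eq : ∑ b, (Wᴴ * ω * W) (a, b) (a', b)
      = ∑ i', ∑ i, star (V i a) * (∑ j, ω (i, j) (i', j)) * V i' a' := by
    calc ∑ b, (Wᴴ * ω * W) (a, b) (a', b)
        = ∑ b, ∑ t, ∑ s, star (W s (a, b)) * ω s t * W t (a', b) := by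
          apply Finset.sum_congr rfl; intro b _
          rw [Matrix.mul_apply]
          apply Finset.sum_congr rfl; intro t _
          rw [Matrix.mul_apply, Finset.sum_mul]
          apply Finset.sum_congr rfl; intro s _
          rw [Matrix.conjTranspose_apply]
      _ = ∑ t, ∑ b, ∑ s, star (W s (a, b)) * ω s t * W t (a', b) := Finset.sum_comm
      _ = ∑ t, ∑ s, ∑ b, star (W s (a, b)) * ω s t * W t (a', b) :=
          Finset.sum_congr rfl fun t _ => Finset.sum_comm
      _ = ∑ t, ∑ s, star (V s.1 a) * ω s t * V t.1 a' * (if t.2 = s.2 then 1 else 0) := by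
          apply Finset.sum_congr rfl; intro t _
          apply Finset.sum_congr rfl; intro s _
          rw [← delta_sum Wb hWb s.2 t.2, Finset.mul_sum]
          apply Finset.sum_congr rfl; intro b _
          simp only [hW, kroneckerMap_apply, star_mul']
          ring
      _ = ∑ i', ∑ j', ∑ i, ∑ j, star (V i a) * ω (i, j) (i', j') * V i' a'
            * (if j' = j then 1 else 0) := by
          rw [Fintype.sum_prod_type]
          apply Finset.sum_congr rfl; intro i' _
          apply Finset.sum_congr rfl; intro j' _
          rw [Fintype.sum_prod_type]
      _ = ∑ i', ∑ j', ∑ i, star (V i a) * ω (i, j') (i', j') * V i' a' := by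
          apply Finset.sum_congr rfl; intro i' _
          apply Finset.sum_congr rfl; intro j' _
          apply Finset.sum_congr rfl; intro i _
          simp only [mul_ite, mul_one, mul_zero]
          rw [Finset.sum_ite_eq]
          simp
      _ = ∑ i', ∑ i, ∑ j', star (V i a) * ω (i, j') (i', j') * V i' a' :=
          Finset.sum_congr rfl fun i' _ => Finset.sum_comm
      _ = ∑ i', ∑ i, star (V i a) * (∑ j, ω (i, j) (i', j)) * V i' a' := by
          apply Finset.sum_congr rfl; intro i' _
          apply Finset.sum_congr rfl; intro i _
          rw [Finset.mul_sum, Finset.sum_mul]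
  rw [lhs_eq]
  rw [Matrix.mul_apply]
  apply Finset.sum_congr rfl; intro i' _
  rw [Matrix.mul_apply, Finset.sum_mul]
  apply Finset.sum_congr rfl; intro i _
  rw [Matrix.conjTranspose_apply, Matrix.of_apply]

lemma pt2 (V : Matrix α α ℂ) (Wb : Matrix β β ℂ) (hV : V * Vᴴ = 1)
    (ω : Matrix (α × β) (α × β) ℂ) (b b' : β) :
    ∑ a, ((V ⊗ₖ Wb)ᴴ * ω * (V ⊗ₖ Wb)) (a, b) (a, b')
      = (Wbᴴ * (Matrix.of fun j j' => ∑ i, ω (i, j) (i, j')) * Wb) b b' := by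
  set W := V ⊗ₖ Wb with hW
  have lhs_eq : ∑ a, (Wᴴ * ω * W) (a, b) (a, b')
      = ∑ j', ∑ j, star (Wb j b) * (∑ i, ω (i, j) (i, j')) * Wb j' b' := by
    calc ∑ a, (Wᴴ * ω * W) (a, b) (a, b')
        = ∑ a, ∑ t, ∑ s, star (W s (a, b)) * ω s t * W t (a, b') := by
          apply Finset.sum_congr rfl; intro a _
          rw [Matrix.mul_apply]
          apply Finset.sum_congr rfl; intro t _
          rw [Matrix.mul_apply, Finset.sum_mul]
          apply Finset.sum_congr rfl; intro s _
          rw [Matrix.conjTranspose_apply]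
      _ = ∑ t, ∑ a, ∑ s, star (W s (a, b)) * ω s t * W t (a, b') := Finset.sum_comm
      _ = ∑ t, ∑ s, ∑ a, star (W s (a, b)) * ω s t * W t (a, b') :=
          Finset.sum_congr rfl fun t _ => Finset.sum_comm
      _ = ∑ t, ∑ s, star (Wb s.2 b) * ω s t * Wb t.2 b' * (if t.1 = s.1 then 1 else 0) := by
          apply Finset.sum_congr rfl; intro t _
          apply Finset.sum_congr rfl; intro s _
          rw [← delta_sum V hV s.1 t.1, Finset.mul_sum]
          apply Finset.sum_congr rfl; intro a _
          simp only [hW, kroneckerMap_apply, star_mul']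
          ring
      _ = ∑ i', ∑ j', ∑ i, ∑ j, star (Wb j b) * ω (i, j) (i', j') * Wb j' b'
            * (if i' = i then 1 else 0) := by
          rw [Fintype.sum_prod_type]
          apply Finset.sum_congr rfl; intro i' _
          apply Finset.sum_congr rfl; intro j' _
          rw [Fintype.sum_prod_type]
      _ = ∑ i', ∑ j', ∑ j, star (Wb j b) * ω (i', j) (i', j') * Wb j' b' := by
          apply Finset.sum_congr rfl; intro i' _
          apply Finset.sum_congr rfl; intro j' _
          rw [Finset.sum_comm]
          apply Finset.sum_congr rfl; intro j _
          simp only [mul_ite, mul_one, mul_zero]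
          rw [Finset.sum_ite_eq]
          simp
      _ = ∑ j', ∑ j, star (Wb j b) * (∑ i, ω (i, j) (i, j')) * Wb j' b' := by
          rw [Finset.sum_comm]
          apply Finset.sum_congr rfl; intro j' _
          rw [Finset.sum_comm]
          apply Finset.sum_congr rfl; intro j _
          rw [Finset.mul_sum, Finset.sum_mul]
  rw [lhs_eq]
  rw [Matrix.mul_apply]
  apply Finset.sum_congr rfl; intro j' _
  rw [Matrix.mul_apply, Finset.sum_mul]
  apply Finset.sum_congr rfl; intro j _
  rw [Matrix.conjTranspose_apply, Matrix.of_apply]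

theorem subadd {ω : Matrix (α × β) (α × β) ℂ} (hω : ω.PosSemidef) (htr : ω.trace = 1)
    {A : Matrix α α ℂ} (hA : A.IsHermitian) (hAdef : ∀ i j, A i j = ∑ b, ω (i, b) (j, b))
    {B : Matrix β β ℂ} (hB : B.IsHermitian) (hBdef : ∀ i j, B i j = ∑ a, ω (a, i) (a, j)) :
    vnEntropy hω.1 ≤ vnEntropy hA + vnEntropy hB := by
  classical
  set m := hω.1.eigenvalues with hm_def
  set q := hA.eigenvalues with hq_def
  set r := hB.eigenvalues with hr_def
  set U : Matrix (α × β) (α × β) ℂ := (hω.1.eigenvectorUnitary : Matrix (α × β) (α × β) ℂ)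
    with hU_def
  set V : Matrix α α ℂ := (hA.eigenvectorUnitary : Matrix α α ℂ) with hV_def
  set Y : Matrix β β ℂ := (hB.eigenvectorUnitary : Matrix β β ℂ) with hY_def
  have hU1 : U * Uᴴ = 1 := by
    rw [← star_eq_conjTranspose]; exact (Matrix.mem_unitaryGroup_iff).mp hω.1.eigenvectorUnitary.2
  have hU2 : Uᴴ * U = 1 := by
    rw [← star_eq_conjTranspose]; exact (Matrix.mem_unitaryGroup_iff').mp hω.1.eigenvectorUnitary.2
  have hV1 : V * Vᴴ = 1 := by
    rw [← star_eq_conjTranspose]; exact (Matrix.mem_unitaryGroup_iff).mp hA.eigenvectorUnitary.2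
  have hY1 : Y * Yᴴ = 1 := by
    rw [← star_eq_conjTranspose]; exact (Matrix.mem_unitaryGroup_iff).mp hB.eigenvectorUnitary.2
  set W : Matrix (α × β) (α × β) ℂ := V ⊗ₖ Y with hW_def
  have hW1 : W * Wᴴ = 1 := by
    rw [hW_def, kron_conjTranspose, ← mul_kronecker_mul, hV1, hY1, one_kronecker_one]
  have hW2 : Wᴴ * W = 1 := by
    rw [hW_def, kron_conjTranspose, ← mul_kronecker_mul]
    rw [show Vᴴ * V = 1 from by
      rw [← star_eq_conjTranspose]
      exact (Matrix.mem_unitaryGroup_iff').mp hA.eigenvectorUnitary.2]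
    rw [show Yᴴ * Y = 1 from by
      rw [← star_eq_conjTranspose]
      exact (Matrix.mem_unitaryGroup_iff').mp hB.eigenvectorUnitary.2]
    rw [one_kronecker_one]
  set G : Matrix (α × β) (α × β) ℂ := Uᴴ * W with hG_def
  have hG1 : G * Gᴴ = 1 := by
    rw [hG_def, conjTranspose_mul, conjTranspose_conjTranspose, Matrix.mul_assoc,
      ← Matrix.mul_assoc W, hW1, Matrix.one_mul, hU2]
  have hG2 : Gᴴ * G = 1 := by
    rw [hG_def, conjTranspose_mul, conjTranspose_conjTranspose, Matrix.mul_assoc,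
      ← Matrix.mul_assoc U, hU1, Matrix.one_mul, hW2]
  set c : (α × β) → (α × β) → ℝ := fun x t => Complex.normSq (G x t) with hc_def
  have hc : ∀ x t, 0 ≤ c x t := fun x t => Complex.normSq_nonneg _
  have hrow : ∀ x, ∑ t, c x t = 1 := by
    intro x
    have h := congrFun (congrFun hG1 x) x
    simp only [mul_apply, conjTranspose_apply, one_apply_eq, RCLike.star_def,
      Complex.mul_conj] at h
    exact_mod_cast h
  have hcol : ∀ t, ∑ x, c x t = 1 := by
    intro t
    have h := congrFun (congrFun hG2 t) t
    simp only [mul_apply, conjTranspose_apply, one_apply_eq, RCLike.star_def] at h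
    have h2 : ∑ x, (Complex.normSq (G x t) : ℂ) = 1 := by
      rw [← h]
      exact Finset.sum_congr rfl fun x _ => Complex.normSq_eq_conj_mul_self
    exact_mod_cast h2
  have hm : ∀ x, 0 ≤ m x := fun x => hω.eigenvalues_nonneg x
  have hspec := hω.1.spectral_theorem
  rw [Unitary.conjStarAlgAut_apply, star_eq_conjTranspose] at hspec
  have hsm : ∑ x, m x = 1 := by
    have h1 : ω.trace = ∑ x, (m x : ℂ) := by
      rw [hspec, Matrix.trace_mul_comm, ← Matrix.mul_assoc, hU2, Matrix.one_mul,
        Matrix.trace_diagonal]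
      rfl
    rw [htr] at h1
    exact_mod_cast h1.symm
  set dd : (α × β) → ℝ := fun t => ∑ x, m x * c x t with hdd_def
  have hdd0 : ∀ t, 0 ≤ dd t :=
    fun t => Finset.sum_nonneg fun x _ => mul_nonneg (hm x) (hc x t)
  have hWoW : Wᴴ * ω * W = Gᴴ * diagonal (RCLike.ofReal ∘ m) * G := by
    rw [hG_def, conjTranspose_mul, conjTranspose_conjTranspose, hspec]
    simp only [Matrix.mul_assoc]
    rfl
  have hd : ∀ t, (Wᴴ * ω * W) t t = ((dd t : ℝ) : ℂ) := by
    intro t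
    rw [hWoW, Matrix.mul_apply]
    have : ∀ x, (Gᴴ * diagonal ((RCLike.ofReal : ℝ → ℂ) ∘ m)) t x * G x t
        = ((m x * c x t : ℝ) : ℂ) := by
      intro x
      rw [Matrix.mul_diagonal, Matrix.conjTranspose_apply]
      rw [show ((RCLike.ofReal : ℝ → ℂ) ∘ m) x = ((m x : ℝ) : ℂ) from rfl]
      push_cast
      rw [hc_def]
      rw [show ((Complex.normSq (G x t) : ℝ) : ℂ) = star (G x t) * G x t from
        Complex.normSq_eq_conj_mul_self]
      ring
    rw [Finset.sum_congr rfl fun x _ => this x, hdd_def]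
    push_cast
    rfl
  have hVAV : Vᴴ * A * V = diagonal (RCLike.ofReal ∘ q) := by
    have := hA.conjStarAlgAut_star_eigenvectorUnitary
    simp only [Unitary.conjStarAlgAut_apply, Unitary.coe_star, star_star, star_eq_conjTranspose, conjTranspose_conjTranspose] at this
    exact this
  have hYBY : Yᴴ * B * Y = diagonal (RCLike.ofReal ∘ r) := by
    have := hB.conjStarAlgAut_star_eigenvectorUnitary
    simp only [Unitary.conjStarAlgAut_apply, Unitary.coe_star, star_star, star_eq_conjTranspose, conjTranspose_conjTranspose] at this
    exact this
  have hdq : ∀ a, ∑ b, dd (a, b) = q a := by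
    intro a
    have h1 : ∑ b, (Wᴴ * ω * W) (a, b) (a, b) = ((q a : ℝ) : ℂ) := by
      rw [hW_def, pt1 V Y hY1 ω a a]
      rw [show (Matrix.of fun i i' => ∑ j, ω (i, j) (i', j)) = A from by
        ext i i'; rw [Matrix.of_apply, hAdef]]
      rw [hVAV, Matrix.diagonal_apply_eq]
      rfl
    have h2 : ∑ b, (Wᴴ * ω * W) (a, b) (a, b) = ((∑ b, dd (a, b) : ℝ) : ℂ) := by
      push_cast
      exact Finset.sum_congr rfl fun b _ => hd (a, b)
    rw [h2] at h1
    exact_mod_cast h1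
  have hdr : ∀ b, ∑ a, dd (a, b) = r b := by
    intro b
    have h1 : ∑ a, (Wᴴ * ω * W) (a, b) (a, b) = ((r b : ℝ) : ℂ) := by
      rw [hW_def, pt2 V Y hV1 ω b b]
      rw [show (Matrix.of fun j j' => ∑ i, ω (i, j) (i, j')) = B from by
        ext j j'; rw [Matrix.of_apply, hBdef]]
      rw [hYBY, Matrix.diagonal_apply_eq]
      rfl
    have h2 : ∑ a, (Wᴴ * ω * W) (a, b) (a, b) = ((∑ a, dd (a, b) : ℝ) : ℂ) := by
      push_cast
      exact Finset.sum_congr rfl fun a _ => hd (a, b)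
    rw [h2] at h1
    exact_mod_cast h1
  have hq0 : ∀ a, 0 ≤ q a := by
    intro a
    rw [← hdq a]
    exact Finset.sum_nonneg fun b _ => hdd0 (a, b)
  have hr0 : ∀ b, 0 ≤ r b := by
    intro b
    rw [← hdr b]
    exact Finset.sum_nonneg fun a _ => hdd0 (a, b)
  have hddsum : ∑ t, dd t = 1 := by
    calc ∑ t, dd t = ∑ x, m x * (∑ t, c x t) := by
          rw [Finset.sum_comm]
          exact Finset.sum_congr rfl fun x _ => by rw [Finset.mul_sum]
      _ = ∑ x, m x := Finset.sum_congr rfl fun x _ => by rw [hrow, mul_one]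
      _ = 1 := hsm
  have hsq : ∑ a, q a = 1 := by
    calc ∑ a, q a = ∑ a, ∑ b, dd (a, b) := Finset.sum_congr rfl fun a _ => (hdq a).symm
      _ = ∑ t, dd t := (Fintype.sum_prod_type _).symm
      _ = 1 := hddsum
  have hsr : ∑ b, r b = 1 := by
    calc ∑ b, r b = ∑ b, ∑ a, dd (a, b) := Finset.sum_congr rfl fun b _ => (hdr b).symm
      _ = ∑ a, ∑ b, dd (a, b) := Finset.sum_comm
      _ = ∑ t, dd t := (Fintype.sum_prod_type _).symm
      _ = 1 := hddsum
  set e : (α × β) → ℝ := fun t => q t.1 * r t.2 with he_def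
  have he : ∀ t, 0 ≤ e t := fun t => mul_nonneg (hq0 t.1) (hr0 t.2)
  have hse : ∑ t, e t = 1 := by
    rw [he_def]
    rw [Fintype.sum_prod_type]
    calc ∑ a, ∑ b, q a * r b = ∑ a, q a * (∑ b, r b) :=
          Finset.sum_congr rfl fun a _ => by rw [Finset.mul_sum]
      _ = 1 := by
          rw [Finset.sum_congr rfl fun a _ => by rw [hsr, mul_one]]
          exact hsq
  have hddq0 : ∀ t, q t.1 = 0 → dd t = 0 := by
    intro t hqt
    have hsum : ∑ b, dd (t.1, b) = 0 := by rw [hdq t.1, hqt]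
    have := (Finset.sum_eq_zero_iff_of_nonneg
      (fun b _ => hdd0 (t.1, b))).mp hsum t.2 (Finset.mem_univ _)
    simpa using this
  have hddr0 : ∀ t, r t.2 = 0 → dd t = 0 := by
    intro t hrt
    have hsum : ∑ a, dd (a, t.2) = 0 := by rw [hdr t.2, hrt]
    have := (Finset.sum_eq_zero_iff_of_nonneg
      (fun a _ => hdd0 (a, t.2))).mp hsum t.1 (Finset.mem_univ _)
    simpa using this
  have hdd_e0 : ∀ t, e t = 0 → dd t = 0 := by
    intro t het
    rcases mul_eq_zero.mp het with h | h
    · exact hddq0 t h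
    · exact hddr0 t h
  have hsupp : ∀ x t, e t = 0 → m x * c x t = 0 := by
    intro x t het
    have h0 : dd t = 0 := hdd_e0 t het
    exact (Finset.sum_eq_zero_iff_of_nonneg
      (fun x _ => mul_nonneg (hm x) (hc x t))).mp h0 x (Finset.mem_univ _)
  have klein := klein_core m e c hm he hc hrow hcol hsm hse hsupp
  have hlhs : ∑ x, ∑ t, c x t * (m x * Real.log (e t))
      = ∑ a, q a * Real.log (q a) + ∑ b, r b * Real.log (r b) := by
    have step1 : ∑ x, ∑ t, c x t * (m x * Real.log (e t))
        = ∑ t, dd t * Real.log (e t) := by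
      rw [Finset.sum_comm]
      apply Finset.sum_congr rfl; intro t _
      rw [hdd_def, Finset.sum_mul]
      apply Finset.sum_congr rfl; intro x _
      ring
    have step2 : ∀ t, dd t * Real.log (e t)
        = dd t * Real.log (q t.1) + dd t * Real.log (r t.2) := by
      intro t
      rcases eq_or_ne (q t.1) 0 with h | h
      · rw [hddq0 t h]; ring
      rcases eq_or_ne (r t.2) 0 with h' | h'
      · rw [hddr0 t h']; ring
      · rw [he_def]
        show dd t * Real.log (q t.1 * r t.2) = _
        rw [Real.log_mul h h']
        ring
    have step3 : ∑ t, (dd t * Real.log (q t.1) + dd t * Real.log (r t.2))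
        = ∑ a, q a * Real.log (q a) + ∑ b, r b * Real.log (r b) := by
      rw [Finset.sum_add_distrib]
      congr 1
      · rw [Fintype.sum_prod_type]
        apply Finset.sum_congr rfl; intro a _
        dsimp only
        rw [← Finset.sum_mul, hdq a]
      · rw [Fintype.sum_prod_type, Finset.sum_comm]
        apply Finset.sum_congr rfl; intro b _
        dsimp only
        rw [← Finset.sum_mul]
        have : ∑ a, dd (a, b) = r b := hdr b
        rw [this]
    rw [step1, Finset.sum_congr rfl fun t _ => step2 t, step3]
  rw [hlhs] at klein
  show -∑ x, m x * Real.log (m x) ≤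
    (-∑ a, q a * Real.log (q a)) + (-∑ b, r b * Real.log (r b))
  linarith

lemma mul_diag_conjT {γ δ : Type*} [Fintype δ] [DecidableEq δ] (X Y : Matrix γ δ ℂ)
    (d : δ → ℂ) (a b : γ) :
    (X * diagonal d * Yᴴ) a b = ∑ x, X a x * d x * star (Y b x) := by
  rw [Matrix.mul_apply]
  apply Finset.sum_congr rfl; intro x _
  rw [Matrix.mul_diagonal, Matrix.conjTranspose_apply]

theorem charpoly_transpose {n : Type*} [Fintype n] [DecidableEq n] (M : Matrix n n ℂ) :
    Mᵀ.charpoly = M.charpoly := by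
  have hcm : Mᵀ.charmatrix = (M.charmatrix)ᵀ := by
    apply Matrix.ext; intro i j
    rw [Matrix.transpose_apply]
    by_cases h : i = j
    · subst h
      rw [charmatrix_apply_eq, charmatrix_apply_eq, Matrix.transpose_apply]
    · rw [charmatrix_apply_ne _ _ _ h,
        charmatrix_apply_ne _ _ _ (fun hh : j = i => h hh.symm), Matrix.transpose_apply]
  rw [Matrix.charpoly, Matrix.charpoly, hcm, det_transpose]

theorem vnEntropy_eq_of_charpoly {m n : Type*} [Fintype m] [Fintype n] [DecidableEq m]
    [DecidableEq n] {A : Matrix m m ℂ} {B : Matrix n n ℂ} (hA : A.IsHermitian)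
    (hB : B.IsHermitian)
    (h : A.charpoly * X ^ Fintype.card n = B.charpoly * X ^ Fintype.card m) :
    vnEntropy hA = vnEntropy hB := by
  unfold vnEntropy
  rw [sum_f_eigs_eq hA hB (fun t => t * Real.log t) (by simp) h]

/-- Lindblad inequality: for a channel `Φ(ρ) = ∑ Kᵢ ρ Kᵢᴴ` with output
`ρ' = Φ(ρ)` and correlation matrix `σᵢⱼ = Tr(Kᵢ ρ Kⱼᴴ)`,
`|S(ρ') − S(ρ)| ≤ S(σ) ≤ S(ρ') + S(ρ)`. -/
theorem lindblad_inequality {k N : ℕ}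
    (K : Fin k → Matrix (Fin N) (Fin N) ℂ)
    (hK : ∑ i, (K i)ᴴ * K i = 1)
    (ρ : Matrix (Fin N) (Fin N) ℂ) (hρ : ρ.PosSemidef) (hρtr : ρ.trace = 1)
    (ρ' : Matrix (Fin N) (Fin N) ℂ)
    (hρ'def : ρ' = ∑ i, K i * ρ * (K i)ᴴ) (hρ' : ρ'.IsHermitian)
    (σ : Matrix (Fin k) (Fin k) ℂ)
    (hσdef : ∀ i j, σ i j = (K i * ρ * (K j)ᴴ).trace)
    (hσ : σ.IsHermitian) :
    |vnEntropy hρ' - vnEntropy hρ.isHermitian| ≤ vnEntropy hσ ∧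
    vnEntropy hσ ≤ vnEntropy hρ' + vnEntropy hρ.isHermitian := by
  classical
  set p := hρ.isHermitian.eigenvalues with hp_def
  have hp : ∀ x, 0 ≤ p x := fun x => hρ.eigenvalues_nonneg x
  set Uρ : Matrix (Fin N) (Fin N) ℂ :=
    (hρ.isHermitian.eigenvectorUnitary : Matrix (Fin N) (Fin N) ℂ) with hU_def
  have hspecρ := hρ.isHermitian.spectral_theorem
  rw [Unitary.conjStarAlgAut_apply, star_eq_conjTranspose] at hspecρ
  have hUU : Uρᴴ * Uρ = 1 := by
    rw [← star_eq_conjTranspose]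
    exact (Matrix.mem_unitaryGroup_iff').mp hρ.isHermitian.eigenvectorUnitary.2
  set Dp : Matrix (Fin N) (Fin N) ℂ := diagonal ((RCLike.ofReal : ℝ → ℂ) ∘ p) with hDp_def
  have hDpe : ∀ x, ((RCLike.ofReal : ℝ → ℂ) ∘ p) x = ((p x : ℝ) : ℂ) := fun _ => rfl
  set L : Fin k → Matrix (Fin N) (Fin N) ℂ := fun i => K i * Uρ with hL_def
  have F1 : ∑ i, (L i)ᴴ * L i = 1 := by
    have step : ∑ i, (L i)ᴴ * L i = Uρᴴ * (∑ i, (K i)ᴴ * K i) * Uρ := by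
      rw [Finset.mul_sum, Finset.sum_mul]
      apply Finset.sum_congr rfl; intro i _
      rw [hL_def]; dsimp only
      rw [conjTranspose_mul]
      simp only [Matrix.mul_assoc]
    rw [step, hK, Matrix.mul_one, hUU]
  have F3 : ∀ x y, ∑ i, ∑ a, star (L i a x) * L i a y = if x = y then (1 : ℂ) else 0 := by
    intro x y
    have h := congrFun (congrFun F1 x) y
    rw [Matrix.sum_apply] at h
    rw [← Matrix.one_apply (i := x) (j := y), ← h]
    apply Finset.sum_congr rfl; intro i _
    rw [Matrix.mul_apply]
    apply Finset.sum_congr rfl; intro a _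
    rw [Matrix.conjTranspose_apply]
  have F3' : ∀ x y, ∑ i, ∑ a, L i a x * star (L i a y) = if x = y then (1 : ℂ) else 0 := by
    intro x y
    have h1 : ∑ i, ∑ a, L i a x * star (L i a y) = ∑ i, ∑ a, star (L i a y) * L i a x := by
      apply Finset.sum_congr rfl; intro i _
      exact Finset.sum_congr rfl fun a _ => mul_comm _ _
    rw [h1, F3 y x]
    by_cases h : x = y
    · subst h; simp
    · rw [if_neg h, if_neg (fun hh => h hh.symm)]
  have hspC : ∑ x, ((p x : ℝ) : ℂ) = 1 := by
    have h1 : ρ.trace = ∑ x, ((p x : ℝ) : ℂ) := by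
      rw [hspecρ, Matrix.trace_mul_comm, ← Matrix.mul_assoc, hUU, Matrix.one_mul,
        Matrix.trace_diagonal]
      rfl
    rw [hρtr] at h1
    exact h1.symm
  set sc : Fin N → ℂ := fun x => ((Real.sqrt (p x) : ℝ) : ℂ) with hsc_def
  have hscstar : ∀ x, star (sc x) = sc x := fun x => Complex.conj_ofReal _
  have hss : ∀ x, sc x * sc x = ((p x : ℝ) : ℂ) := fun x => by
    rw [hsc_def]; dsimp only
    rw [← Complex.ofReal_mul, Real.mul_self_sqrt (hp x)]
  have F2 : ∀ i j, K i * ρ * (K j)ᴴ = L i * Dp * (L j)ᴴ := by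
    intro i j
    rw [hL_def]; dsimp only
    rw [conjTranspose_mul, hspecρ, hDp_def]
    simp only [Matrix.mul_assoc]
    rfl
  have F4 : ∀ i j a b, (L i * Dp * (L j)ᴴ) a b
      = ∑ x, ((p x : ℝ) : ℂ) * (L i a x * star (L j b x)) := by
    intro i j a b
    rw [hDp_def, mul_diag_conjT]
    apply Finset.sum_congr rfl; intro x _
    rw [hDpe]
    ring
  have hσ' : ∀ i j, σ i j = ∑ a, ∑ x, ((p x : ℝ) : ℂ) * (L i a x * star (L j a x)) := by
    intro i j
    rw [hσdef i j, F2 i j]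
    show ∑ a, (L i * Dp * (L j)ᴴ) a a = _
    exact Finset.sum_congr rfl fun a _ => F4 i j a a
  have hρ'e : ∀ a b, ρ' a b = ∑ i, ∑ x, ((p x : ℝ) : ℂ) * (L i a x * star (L i b x)) := by
    intro a b
    rw [hρ'def, Matrix.sum_apply]
    apply Finset.sum_congr rfl; intro i _
    rw [F2 i i]
    exact F4 i i a b
  -- ============ Application 1 ============
  set M₁ : Matrix (Fin k × Fin N) (Fin N) ℂ :=
    Matrix.of (fun ia x => sc x * L ia.1 ia.2 x) with hM₁
  have hω₁ : (M₁ * M₁ᴴ).PosSemidef := posSemidef_self_mul_conjTranspose M₁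
  have hω₁e : ∀ ia jb : Fin k × Fin N, (M₁ * M₁ᴴ) ia jb
      = ∑ x, ((p x : ℝ) : ℂ) * (L ia.1 ia.2 x * star (L jb.1 jb.2 x)) := by
    intro ia jb
    rw [Matrix.mul_apply]
    apply Finset.sum_congr rfl; intro x _
    rw [Matrix.conjTranspose_apply, hM₁]
    dsimp only [Matrix.of_apply]
    rw [star_mul', hscstar]
    calc sc x * L ia.1 ia.2 x * (sc x * star (L jb.1 jb.2 x))
        = sc x * sc x * (L ia.1 ia.2 x * star (L jb.1 jb.2 x)) := by ring
      _ = _ := by rw [hss]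
  have hg1 : M₁ᴴ * M₁ = diagonal (fun x => ((p x : ℝ) : ℂ)) := by
    ext x y
    rw [Matrix.mul_apply]
    have hterm : ∀ ia : Fin k × Fin N, M₁ᴴ x ia * M₁ ia y
        = sc x * sc y * (star (L ia.1 ia.2 x) * L ia.1 ia.2 y) := by
      intro ia
      rw [Matrix.conjTranspose_apply, hM₁]
      dsimp only [Matrix.of_apply]
      rw [star_mul', hscstar]
      ring
    rw [Finset.sum_congr rfl fun ia _ => hterm ia, ← Finset.mul_sum]
    rw [show (∑ ia : Fin k × Fin N, star (L ia.1 ia.2 x) * L ia.1 ia.2 y)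
        = ∑ i, ∑ a, star (L i a x) * L i a y from Fintype.sum_prod_type _]
    rw [F3 x y, Matrix.diagonal_apply]
    by_cases h : x = y
    · subst h; rw [if_pos rfl, if_pos rfl, mul_one, hss]
    · rw [if_neg h, if_neg h, mul_zero]
  have hm1A : ∀ i j, σ i j = ∑ a, (M₁ * M₁ᴴ) (i, a) (j, a) := by
    intro i j
    rw [hσ' i j]
    exact Finset.sum_congr rfl fun a _ => (hω₁e (i, a) (j, a)).symm
  have hm1B : ∀ a b, ρ' a b = ∑ i, (M₁ * M₁ᴴ) (i, a) (i, b) := by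
    intro a b
    rw [hρ'e a b]
    exact Finset.sum_congr rfl fun i _ => (hω₁e (i, a) (i, b)).symm
  have htrρ' : ρ'.trace = 1 := by
    show ∑ a, ρ' a a = 1
    calc ∑ a, ρ' a a
        = ∑ a, ∑ i, ∑ x, ((p x : ℝ) : ℂ) * (L i a x * star (L i a x)) :=
          Finset.sum_congr rfl fun a _ => hρ'e a a
      _ = ∑ i, ∑ a, ∑ x, ((p x : ℝ) : ℂ) * (L i a x * star (L i a x)) := Finset.sum_comm
      _ = ∑ i, ∑ x, ∑ a, ((p x : ℝ) : ℂ) * (L i a x * star (L i a x)) :=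
          Finset.sum_congr rfl fun i _ => Finset.sum_comm
      _ = ∑ x, ∑ i, ∑ a, ((p x : ℝ) : ℂ) * (L i a x * star (L i a x)) := Finset.sum_comm
      _ = ∑ x, ((p x : ℝ) : ℂ) * (∑ i, ∑ a, L i a x * star (L i a x)) := by
          apply Finset.sum_congr rfl; intro x _
          rw [Finset.mul_sum]
          apply Finset.sum_congr rfl; intro i _
          rw [Finset.mul_sum]
      _ = ∑ x, ((p x : ℝ) : ℂ) := by
          apply Finset.sum_congr rfl; intro x _
          rw [F3' x x, if_pos rfl, mul_one]
      _ = 1 := hspC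
  have htrω₁ : (M₁ * M₁ᴴ).trace = 1 := by
    show ∑ s : Fin k × Fin N, (M₁ * M₁ᴴ) s s = 1
    calc ∑ s : Fin k × Fin N, (M₁ * M₁ᴴ) s s
        = ∑ i, ∑ a, (M₁ * M₁ᴴ) (i, a) (i, a) := Fintype.sum_prod_type _
      _ = ∑ a, ∑ i, (M₁ * M₁ᴴ) (i, a) (i, a) := Finset.sum_comm
      _ = ∑ a, ρ' a a := Finset.sum_congr rfl fun a _ => (hm1B a a).symm
      _ = 1 := htrρ'
  have hE1 : vnEntropy hω₁.1 = vnEntropy hρ.isHermitian := by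
    apply vnEntropy_eq_of_charpoly
    have hrect := charpoly_mul_comm_rect M₁ M₁ᴴ
    rw [hg1] at hrect
    rw [hrect, charpoly_diag, charpoly_of_hermitian hρ.isHermitian]
  have S1 := subadd hω₁ htrω₁ hσ hm1A hρ' hm1B
  rw [hE1] at S1
  -- ============ Application 2 ============
  set M₂ : Matrix (Fin k × Fin N) (Fin N) ℂ :=
    Matrix.of (fun ix a => sc ix.2 * L ix.1 a ix.2) with hM₂
  have hω₂ : (M₂ * M₂ᴴ).PosSemidef := posSemidef_self_mul_conjTranspose M₂
  have hω₂e : ∀ s t : Fin k × Fin N, (M₂ * M₂ᴴ) s t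
      = sc s.2 * sc t.2 * ∑ a, L s.1 a s.2 * star (L t.1 a t.2) := by
    intro s t
    rw [Matrix.mul_apply, Finset.mul_sum]
    apply Finset.sum_congr rfl; intro a _
    rw [Matrix.conjTranspose_apply, hM₂]
    dsimp only [Matrix.of_apply]
    rw [star_mul', hscstar]
    ring
  have hm2A : ∀ i j, σ i j = ∑ x, (M₂ * M₂ᴴ) (i, x) (j, x) := by
    intro i j
    rw [hσ' i j, Finset.sum_comm]
    apply Finset.sum_congr rfl; intro x _
    rw [hω₂e (i, x) (j, x)]
    dsimp only
    rw [← Finset.mul_sum, hss]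
  have hm2B : ∀ x y, diagonal (fun x => ((p x : ℝ) : ℂ)) x y
      = ∑ i, (M₂ * M₂ᴴ) (i, x) (i, y) := by
    intro x y
    have : ∑ i, (M₂ * M₂ᴴ) (i, x) (i, y)
        = sc x * sc y * ∑ i, ∑ a, L i a x * star (L i a y) := by
      rw [Finset.mul_sum]
      exact Finset.sum_congr rfl fun i _ => hω₂e (i, x) (i, y)
    rw [this, F3' x y, Matrix.diagonal_apply]
    by_cases h : x = y
    · subst h; rw [if_pos rfl, if_pos rfl, mul_one, hss]
    · rw [if_neg h, if_neg h, mul_zero]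
  have hDh : (diagonal (fun x => ((p x : ℝ) : ℂ))).IsHermitian := by
    have hst : (star fun x => ((p x : ℝ) : ℂ)) = (fun x => ((p x : ℝ) : ℂ)) := by
      funext x
      rw [Pi.star_apply]
      exact Complex.conj_ofReal _
    rw [Matrix.IsHermitian, diagonal_conjTranspose, hst]
  have htrω₂ : (M₂ * M₂ᴴ).trace = 1 := by
    show ∑ s : Fin k × Fin N, (M₂ * M₂ᴴ) s s = 1
    calc ∑ s : Fin k × Fin N, (M₂ * M₂ᴴ) s s
        = ∑ i, ∑ x, (M₂ * M₂ᴴ) (i, x) (i, x) := Fintype.sum_prod_type _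
      _ = ∑ x, ∑ i, (M₂ * M₂ᴴ) (i, x) (i, x) := Finset.sum_comm
      _ = ∑ x, diagonal (fun x => ((p x : ℝ) : ℂ)) x x :=
          Finset.sum_congr rfl fun x _ => (hm2B x x).symm
      _ = ∑ x, ((p x : ℝ) : ℂ) :=
          Finset.sum_congr rfl fun x _ => Matrix.diagonal_apply_eq _ x
      _ = 1 := hspC
  have hg2 : M₂ᴴ * M₂ = ρ'ᵀ := by
    ext a b
    rw [Matrix.mul_apply, Matrix.transpose_apply, hρ'e b a]
    rw [show (∑ s : Fin k × Fin N, M₂ᴴ a s * M₂ s b)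
        = ∑ i, ∑ x, M₂ᴴ a (i, x) * M₂ (i, x) b from Fintype.sum_prod_type _]
    apply Finset.sum_congr rfl; intro i _
    apply Finset.sum_congr rfl; intro x _
    rw [Matrix.conjTranspose_apply, hM₂]
    dsimp only [Matrix.of_apply]
    rw [star_mul', hscstar]
    calc sc x * star (L i a x) * (sc x * L i b x)
        = sc x * sc x * (L i b x * star (L i a x)) := by ring
      _ = _ := by rw [hss]
  have hE2 : vnEntropy hω₂.1 = vnEntropy hρ' := by
    apply vnEntropy_eq_of_charpoly
    have hrect := charpoly_mul_comm_rect M₂ M₂ᴴ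
    rw [hg2, _root_.charpoly_transpose] at hrect
    exact hrect
  have hED : vnEntropy hDh = vnEntropy hρ.isHermitian := by
    apply vnEntropy_eq_of_charpoly
    rw [charpoly_diag, charpoly_of_hermitian hρ.isHermitian]
  have S2 := subadd hω₂ htrω₂ hσ hm2A hDh hm2B
  rw [hE2, hED] at S2
  -- ============ Application 3 ============
  set M₃ : Matrix (Fin N × Fin N) (Fin k) ℂ :=
    Matrix.of (fun ax i => sc ax.2 * L i ax.1 ax.2) with hM₃
  have hω₃ : (M₃ * M₃ᴴ).PosSemidef := posSemidef_self_mul_conjTranspose M₃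
  have hω₃e : ∀ s t : Fin N × Fin N, (M₃ * M₃ᴴ) s t
      = sc s.2 * sc t.2 * ∑ i, L i s.1 s.2 * star (L i t.1 t.2) := by
    intro s t
    rw [Matrix.mul_apply, Finset.mul_sum]
    apply Finset.sum_congr rfl; intro i _
    rw [Matrix.conjTranspose_apply, hM₃]
    dsimp only [Matrix.of_apply]
    rw [star_mul', hscstar]
    ring
  have hm3A : ∀ a b, ρ' a b = ∑ x, (M₃ * M₃ᴴ) (a, x) (b, x) := by
    intro a b
    rw [hρ'e a b, Finset.sum_comm]
    apply Finset.sum_congr rfl; intro x _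
    rw [hω₃e (a, x) (b, x)]
    dsimp only
    rw [← Finset.mul_sum, hss]
  have hm3B : ∀ x y, diagonal (fun x => ((p x : ℝ) : ℂ)) x y
      = ∑ a, (M₃ * M₃ᴴ) (a, x) (a, y) := by
    intro x y
    have step : ∑ a, (M₃ * M₃ᴴ) (a, x) (a, y)
        = sc x * sc y * ∑ a, ∑ i, L i a x * star (L i a y) := by
      rw [Finset.mul_sum]
      exact Finset.sum_congr rfl fun a _ => hω₃e (a, x) (a, y)
    rw [step, Finset.sum_comm, F3' x y, Matrix.diagonal_apply]
    by_cases h : x = y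
    · subst h; rw [if_pos rfl, if_pos rfl, mul_one, hss]
    · rw [if_neg h, if_neg h, mul_zero]
  have htrω₃ : (M₃ * M₃ᴴ).trace = 1 := by
    show ∑ s : Fin N × Fin N, (M₃ * M₃ᴴ) s s = 1
    calc ∑ s : Fin N × Fin N, (M₃ * M₃ᴴ) s s
        = ∑ a, ∑ x, (M₃ * M₃ᴴ) (a, x) (a, x) := Fintype.sum_prod_type _
      _ = ∑ x, ∑ a, (M₃ * M₃ᴴ) (a, x) (a, x) := Finset.sum_comm
      _ = ∑ x, diagonal (fun x => ((p x : ℝ) : ℂ)) x x :=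
          Finset.sum_congr rfl fun x _ => (hm3B x x).symm
      _ = ∑ x, ((p x : ℝ) : ℂ) :=
          Finset.sum_congr rfl fun x _ => Matrix.diagonal_apply_eq _ x
      _ = 1 := hspC
  have hg3 : M₃ᴴ * M₃ = σᵀ := by
    ext i j
    rw [Matrix.mul_apply, Matrix.transpose_apply, hσ' j i]
    rw [show (∑ s : Fin N × Fin N, M₃ᴴ i s * M₃ s j)
        = ∑ a, ∑ x, M₃ᴴ i (a, x) * M₃ (a, x) j from Fintype.sum_prod_type _]
    apply Finset.sum_congr rfl; intro a _
    apply Finset.sum_congr rfl; intro x _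
    rw [Matrix.conjTranspose_apply, hM₃]
    dsimp only [Matrix.of_apply]
    rw [star_mul', hscstar]
    calc sc x * star (L i a x) * (sc x * L j a x)
        = sc x * sc x * (L j a x * star (L i a x)) := by ring
      _ = _ := by rw [hss]
  have hE3 : vnEntropy hω₃.1 = vnEntropy hσ := by
    apply vnEntropy_eq_of_charpoly
    have hrect := charpoly_mul_comm_rect M₃ M₃ᴴ
    rw [hg3, _root_.charpoly_transpose] at hrect
    exact hrect
  have S3 := subadd hω₃ htrω₃ hρ' hm3A hDh hm3B
  rw [hE3, hED] at S3
  -- ============ Conclusion ============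
  constructor
  · rw [abs_le]
    constructor
    · linarith
    · linarith
  · linarith
end Aux
end

section
/- For invertible density matrices ρ₁, ρ₂, define √(ρ₁ρ₂) := ρ₁^{1/2} √(ρ₁^{1/2} ρ₂ ρ₁^{1/2}) ρ₁^{−1/2}. Then the 2N×2N block matrix [[ρ₁, √(ρ₁ρ₂)],[√(ρ₂ρ₁), ρ₂]] is positive semidefinite, where √(ρ₂ρ₁) = (√(ρ₁ρ₂))†. -/
open Matrix
open scoped ComplexOrder

/-- For invertible density matrices `ρ₁, ρ₂`, with
`√(ρ₁ρ₂) := ρ₁^{1/2} √(ρ₁^{1/2} ρ₂ ρ₁^{1/2}) ρ₁^{−1/2}`, the block matrix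
`[[ρ₁, √(ρ₁ρ₂)],[(√(ρ₁ρ₂))ᴴ, ρ₂]]` is positive semidefinite. -/
theorem block_matrix_with_sqrt_product_posSemidef {N : ℕ}
    (ρ₁ ρ₂ : Matrix (Fin N) (Fin N) ℂ)
    (h1 : ρ₁.PosDef) (h2 : ρ₂.PosDef)
    (htr1 : ρ₁.trace = 1) (htr2 : ρ₂.trace = 1)
    (S1 : Matrix (Fin N) (Fin N) ℂ) (hS1 : S1.PosSemidef) (hS1sq : S1 * S1 = ρ₁)
    (T : Matrix (Fin N) (Fin N) ℂ) (hT : T.PosSemidef) (hTsq : T * T = S1 * ρ₂ * S1)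
    (X : Matrix (Fin N) (Fin N) ℂ) (hX : X = S1 * T * S1⁻¹) :
    (Matrix.fromBlocks ρ₁ X Xᴴ ρ₂).PosSemidef := by
  have hS1h : S1.IsHermitian := hS1.1
  have hdet : IsUnit S1.det := by
    have : S1.det * S1.det = ρ₁.det := by
      rw [← Matrix.det_mul, hS1sq]
    have hu : IsUnit ρ₁.det := h1.det_pos.ne'.isUnit
    rw [← this] at hu
    exact (isUnit_of_mul_isUnit_left hu)
  have hinv : S1 * S1⁻¹ = 1 := Matrix.mul_nonsing_inv S1 hdet
  have hinv' : S1⁻¹ * S1 = 1 := Matrix.nonsing_inv_mul S1 hdet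
  have hS1invh : S1⁻¹.IsHermitian := hS1h.inv
  have hTh : T.IsHermitian := hT.1
  have key : Matrix.fromBlocks ρ₁ X Xᴴ ρ₂
      = (Matrix.fromBlocks S1 (T * S1⁻¹) 0 0)ᴴ * (Matrix.fromBlocks S1 (T * S1⁻¹) 0 0) := by
    rw [Matrix.fromBlocks_conjTranspose, Matrix.fromBlocks_multiply]
    have e1 : S1ᴴ * S1 + 0ᴴ * 0 = ρ₁ := by simp [hS1h.eq, hS1sq]
    have e2 : S1ᴴ * (T * S1⁻¹) + 0ᴴ * 0 = X := by
      simp [hS1h.eq, hX, Matrix.mul_assoc]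
    have e3 : (T * S1⁻¹)ᴴ * S1 + 0ᴴ * 0 = Xᴴ := by
      rw [hX]
      simp [Matrix.conjTranspose_mul, hS1invh.eq, hTh.eq, hS1h.eq, Matrix.mul_assoc]
    have e4 : (T * S1⁻¹)ᴴ * (T * S1⁻¹) + 0ᴴ * 0 = ρ₂ := by
      simp only [Matrix.conjTranspose_mul, hS1invh.eq, hTh.eq,
        Matrix.conjTranspose_zero, Matrix.zero_mul, Matrix.mul_zero, add_zero]
      calc S1⁻¹ * T * (T * S1⁻¹) = S1⁻¹ * (T * T) * S1⁻¹ := by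
            simp [Matrix.mul_assoc]
        _ = ρ₂ := by
            rw [hTsq]
            calc S1⁻¹ * (S1 * ρ₂ * S1) * S1⁻¹
                = (S1⁻¹ * S1) * ρ₂ * (S1 * S1⁻¹) := by
                  simp [Matrix.mul_assoc]
              _ = ρ₂ := by rw [hinv, hinv']; simp
    rw [e1, e2, e3, e4]
  rw [key]
  exact Matrix.posSemidef_conjTranspose_mul_self _
end

section
/- For a one-qubit Davies channel Φ with Bloch-representation parameters η₁ = η₂ = c (axes in the x,y directions), η₃ and translation κ₃ along the z-axis, assuming η₁² > η₃² ≥ 0 and κ₃ ≥ 0, the maximal Euclidean (operator 2-) norm of the output over all density matrices equals M_Φ = ½(1 + √(η₁² + κ₃²η₁²/(η₁² − η₃²))). -/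
open Matrix
open scoped ComplexOrder

/-- The one-qubit state `½(I + x·σ)` with Bloch vector `x ∈ ℝ³`. -/
noncomputable def blochState (x : Fin 3 → ℝ) : Matrix (Fin 2) (Fin 2) ℂ :=
  (1 / 2 : ℂ) • !![1 + (x 2 : ℂ), (x 0 : ℂ) - Complex.I * (x 1 : ℂ);
                   (x 0 : ℂ) + Complex.I * (x 1 : ℂ), 1 - (x 2 : ℂ)]


set_option maxHeartbeats 1000000
set_option synthInstance.maxHeartbeats 400000

private lemma aux_sq (x : Fin 3 → ℝ) (r : ℝ)
    (hrC : (r : ℂ)^2 = (x 0 : ℂ)^2 + (x 1 : ℂ)^2 + (x 2 : ℂ)^2) :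
    (!![(x 2 : ℂ), (x 0 : ℂ) - Complex.I * (x 1 : ℂ);
       (x 0 : ℂ) + Complex.I * (x 1 : ℂ), -(x 2 : ℂ)] : Matrix (Fin 2) (Fin 2) ℂ) *
    !![(x 2 : ℂ), (x 0 : ℂ) - Complex.I * (x 1 : ℂ);
       (x 0 : ℂ) + Complex.I * (x 1 : ℂ), -(x 2 : ℂ)] = ((r : ℂ)^2) • 1 := by
  ext i j
  fin_cases i <;> fin_cases j <;>
    simp [Matrix.mul_apply, Fin.sum_univ_two, Matrix.one_apply]
  · linear_combination -hrC - ((x 1 : ℂ)^2)*Complex.I_sq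
  · ring
  · ring
  · linear_combination -hrC - ((x 1 : ℂ)^2)*Complex.I_sq

private lemma aux_herm (x : Fin 3 → ℝ) :
    (!![(x 2 : ℂ), (x 0 : ℂ) - Complex.I * (x 1 : ℂ);
       (x 0 : ℂ) + Complex.I * (x 1 : ℂ), -(x 2 : ℂ)] : Matrix (Fin 2) (Fin 2) ℂ)ᴴ =
    !![(x 2 : ℂ), (x 0 : ℂ) - Complex.I * (x 1 : ℂ);
       (x 0 : ℂ) + Complex.I * (x 1 : ℂ), -(x 2 : ℂ)] := by
  ext i j
  fin_cases i <;> fin_cases j <;>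
    simp [Matrix.conjTranspose_apply, Complex.ext_iff]

private lemma aux_split (x : Fin 3 → ℝ) :
    blochState x = (1/2 : ℂ) • (1 +
      !![(x 2 : ℂ), (x 0 : ℂ) - Complex.I * (x 1 : ℂ);
         (x 0 : ℂ) + Complex.I * (x 1 : ℂ), -(x 2 : ℂ)]) := by
  rw [blochState]
  congr 1
  ext i j
  fin_cases i <;> fin_cases j <;> simp [Matrix.one_apply] <;> ring

private lemma aux_eig1 (x : Fin 3 → ℝ) (r : ℝ) (h0 : x 0 = 0) (h1 : x 1 = 0)
    (hz : x 2 = -r) :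
    (blochState x).mulVec ![0, 1] = ((((1+r)/2 : ℝ)) : ℂ) • ![0, 1] := by
  funext i
  fin_cases i <;>
    simp [blochState, Matrix.mulVec, dotProduct, Fin.sum_univ_two, h0, h1, hz] <;>
    push_cast <;> ring

private lemma aux_eig2 (x : Fin 3 → ℝ) (r : ℝ)
    (hrC : (r : ℂ)^2 = (x 0 : ℂ)^2 + (x 1 : ℂ)^2 + (x 2 : ℂ)^2) :
    (blochState x).mulVec ![((r + x 2 : ℝ) : ℂ), (x 0 : ℂ) + Complex.I * (x 1 : ℂ)]
      = ((((1+r)/2 : ℝ)) : ℂ) • ![((r + x 2 : ℝ) : ℂ), (x 0 : ℂ) + Complex.I * (x 1 : ℂ)] := by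
  funext i
  fin_cases i <;>
    simp [blochState, Matrix.mulVec, dotProduct, Fin.sum_univ_two] <;>
    push_cast <;>
    first
      | linear_combination (1/2 : ℂ) * hrC
      | linear_combination (-1/2 : ℂ) * hrC
      | linear_combination (1/2 : ℂ) * hrC - ((x 1 : ℂ)^2/2)*Complex.I_sq
      | linear_combination (-1/2 : ℂ) * hrC + ((x 1 : ℂ)^2/2)*Complex.I_sq
      | linear_combination (1/2 : ℂ) * hrC + ((x 1 : ℂ)^2/2)*Complex.I_sq
      | linear_combination (-1/2 : ℂ) * hrC - ((x 1 : ℂ)^2/2)*Complex.I_sq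
      | ring

lemma bloch_norm (x : Fin 3 → ℝ) :
    ‖Matrix.toEuclideanCLM (𝕜 := ℂ) (blochState x)‖
      = 1 / 2 * (1 + Real.sqrt (x 0 ^ 2 + x 1 ^ 2 + x 2 ^ 2)) := by
  set r : ℝ := Real.sqrt (x 0 ^ 2 + x 1 ^ 2 + x 2 ^ 2) with hrdef
  have hr0 : 0 ≤ r := Real.sqrt_nonneg _
  have hr2 : r ^ 2 = x 0 ^ 2 + x 1 ^ 2 + x 2 ^ 2 := by
    rw [hrdef, Real.sq_sqrt] ; positivity
  have hrC : (r : ℂ)^2 = (x 0 : ℂ)^2 + (x 1 : ℂ)^2 + (x 2 : ℂ)^2 := by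
    exact_mod_cast congrArg (Complex.ofReal) hr2
  clear_value r
  set B : Matrix (Fin 2) (Fin 2) ℂ :=
    !![(x 2 : ℂ), (x 0 : ℂ) - Complex.I * (x 1 : ℂ);
       (x 0 : ℂ) + Complex.I * (x 1 : ℂ), -(x 2 : ℂ)] with hBdef
  set S := Matrix.toEuclideanCLM (𝕜 := ℂ) B with hSdef
  set T := Matrix.toEuclideanCLM (𝕜 := ℂ) (blochState x) with hTdef
  have hSnorm : ‖S‖ = r := by
    have h1 : star S * S = ((r:ℂ)^2) • 1 := by
      rw [hSdef, ← map_star, ← _root_.map_mul, star_eq_conjTranspose, hBdef, aux_herm x,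
        aux_sq x r hrC, _root_.map_smul, _root_.map_one]
    have h2 : ‖star S * S‖ = r ^ 2 := by
      rw [h1, norm_smul ((r:ℂ)^2) (1 : EuclideanSpace ℂ (Fin 2) →L[ℂ] EuclideanSpace ℂ (Fin 2)),
        norm_one, norm_pow, Complex.norm_real, Real.norm_of_nonneg hr0, mul_one]
    rw [ContinuousLinearMap.star_eq_adjoint, ContinuousLinearMap.mul_def,
      ContinuousLinearMap.norm_adjoint_comp_self] at h2
    nlinarith [norm_nonneg S]
  have hup : ‖T‖ ≤ 1 / 2 * (1 + r) := by
    rw [hTdef, aux_split x, _root_.map_smul, _root_.map_add, _root_.map_one, ← hBdef, ← hSdef,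
      norm_smul (1/2 : ℂ) ((1 : EuclideanSpace ℂ (Fin 2) →L[ℂ] EuclideanSpace ℂ (Fin 2)) + S)]
    have h12 : ‖(1/2 : ℂ)‖ = 1/2 := by simp
    rw [h12]
    have hb : ‖(1 : EuclideanSpace ℂ (Fin 2) →L[ℂ] EuclideanSpace ℂ (Fin 2)) + S‖ ≤ 1 + r := by
      calc ‖(1 : EuclideanSpace ℂ (Fin 2) →L[ℂ] EuclideanSpace ℂ (Fin 2)) + S‖
          ≤ ‖(1 : EuclideanSpace ℂ (Fin 2) →L[ℂ] EuclideanSpace ℂ (Fin 2))‖ + ‖S‖ :=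
            norm_add_le _ _
        _ = 1 + r := by rw [hSnorm, norm_one]
    linarith
  have hlo : 1 / 2 * (1 + r) ≤ ‖T‖ := by
    obtain ⟨w, hw0, hmv⟩ : ∃ w : Fin 2 → ℂ, w ≠ 0 ∧
        (blochState x).mulVec w = ((((1+r)/2 : ℝ)) : ℂ) • w := by
      by_cases hz : x 2 = -r
      · have h01 : x 0 ^ 2 + x 1 ^ 2 = 0 := by nlinarith
        have h0 : x 0 = 0 := by nlinarith [sq_nonneg (x 0), sq_nonneg (x 1)]
        have h1 : x 1 = 0 := by nlinarith [sq_nonneg (x 0), sq_nonneg (x 1)]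
        refine ⟨![0, 1], ?_, aux_eig1 x r h0 h1 hz⟩
        intro h
        have := congrFun h 1
        simp at this
      · refine ⟨![((r + x 2 : ℝ) : ℂ), (x 0 : ℂ) + Complex.I * (x 1 : ℂ)], ?_, aux_eig2 x r hrC⟩
        intro h
        have h' := congrFun h 0
        simp at h'
        have : r + x 2 = 0 := by exact_mod_cast h'
        exact hz (by linarith)
    set v : EuclideanSpace ℂ (Fin 2) := (WithLp.equiv 2 (Fin 2 → ℂ)).symm w with hvdef
    have hv0 : v ≠ 0 := by
      simpa [hvdef] using hw0
    have hTv : T v = ((((1+r)/2 : ℝ)) : ℂ) • v := by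
      rw [hvdef, hTdef, WithLp.equiv_symm_apply, Matrix.toEuclideanCLM_toLp, hmv]
      rfl
    have hn : ‖T v‖ = (1+r)/2 * ‖v‖ := by
      rw [hTv, norm_smul ((((1+r)/2 : ℝ)) : ℂ) v, Complex.norm_real,
        Real.norm_of_nonneg (by positivity)]
    have hle := T.le_opNorm v
    rw [hn] at hle
    have hvpos : 0 < ‖v‖ := norm_pos_iff.mpr hv0
    have : (1+r)/2 ≤ ‖T‖ := by
      by_contra hcon
      push_neg at hcon
      nlinarith
    linarith
  linarith

lemma bloch_trace (x : Fin 3 → ℝ) : (blochState x).trace = 1 := by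
  simp [blochState, Matrix.trace_fin_two]
  ring

lemma bloch_psd (z : ℝ) (hz : z^2 ≤ 1) :
    (blochState ![Real.sqrt (1-z^2), 0, z]).PosSemidef := by
  have h1z : (0:ℝ) ≤ 1 - z := by nlinarith
  have h1z' : (0:ℝ) ≤ 1 + z := by nlinarith
  set t := Real.sqrt (1+z) with htdef
  set s := Real.sqrt (1-z) with hsdef
  have ht : t^2 = 1+z := Real.sq_sqrt h1z'
  have hs : s^2 = 1-z := Real.sq_sqrt h1z
  have hw : Real.sqrt (1-z^2) = t*s := by
    have h : (1:ℝ) - z^2 = (1+z)*(1-z) := by ring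
    rw [h, Real.sqrt_mul h1z']
  have htC : (t:ℂ)^2 = 1 + (z:ℂ) := by exact_mod_cast congrArg Complex.ofReal ht
  have hsC : (s:ℂ)^2 = 1 - (z:ℂ) := by exact_mod_cast congrArg Complex.ofReal hs
  rw [Matrix.posSemidef_iff_dotProduct_mulVec]
  constructor
  · show _ᴴ = _
    ext i j
    fin_cases i <;> fin_cases j <;>
      simp [blochState, Matrix.conjTranspose_apply, Complex.ext_iff]
  · intro v
    have key : dotProduct (star v) ((blochState ![Real.sqrt (1-z^2), 0, z]) *ᵥ v)
        = (1/2 : ℂ) * ((starRingEnd ℂ) ((t:ℂ) * v 0 + (s:ℂ) * v 1)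
            * ((t:ℂ) * v 0 + (s:ℂ) * v 1)) := by
      simp [blochState, dotProduct, Matrix.mulVec, Fin.sum_univ_two, hw, map_add,
        _root_.map_mul, Complex.conj_ofReal, Pi.star_apply, RCLike.star_def]
      ring_nf
      linear_combination (-(starRingEnd ℂ) (v 0) * v 0 / 2) * htC
        + (-(starRingEnd ℂ) (v 1) * v 1 / 2) * hsC
    rw [key]
    have hcm : (starRingEnd ℂ) ((t:ℂ) * v 0 + (s:ℂ) * v 1) * ((t:ℂ) * v 0 + (s:ℂ) * v 1)
        = (Complex.normSq ((t:ℂ) * v 0 + (s:ℂ) * v 1) : ℝ) := by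
      rw [mul_comm, Complex.mul_conj]
    rw [hcm]
    have h2 : (1/2 : ℂ) * (Complex.normSq ((t:ℂ) * v 0 + (s:ℂ) * v 1) : ℝ)
        = ((Complex.normSq ((t:ℂ) * v 0 + (s:ℂ) * v 1) / 2 : ℝ) : ℂ) := by
      push_cast; ring
    rw [h2]
    rw [Complex.zero_le_real]
    have := Complex.normSq_nonneg ((t:ℂ) * v 0 + (s:ℂ) * v 1)
    linarith

lemma bloch_repr {ρ : Matrix (Fin 2) (Fin 2) ℂ} (hpsd : ρ.PosSemidef) (htr : ρ.trace = 1) :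
    ∃ x : Fin 3 → ℝ, ρ = blochState x ∧ x 0 ^ 2 + x 1 ^ 2 + x 2 ^ 2 ≤ 1 := by
  have hH := hpsd.1
  have h00 : (starRingEnd ℂ) (ρ 0 0) = ρ 0 0 := hH.apply 0 0
  have h11 : (starRingEnd ℂ) (ρ 1 1) = ρ 1 1 := hH.apply 1 1
  have h01 : (starRingEnd ℂ) (ρ 1 0) = ρ 0 1 := hH.apply 0 1
  have h00im : (ρ 0 0).im = 0 := Complex.conj_eq_iff_im.mp h00
  have h11im : (ρ 1 1).im = 0 := Complex.conj_eq_iff_im.mp h11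
  have htrace : ρ 0 0 + ρ 1 1 = 1 := by
    rw [Matrix.trace_fin_two] at htr; exact htr
  have htre : (ρ 0 0).re + (ρ 1 1).re = 1 := by
    have := congrArg Complex.re htrace; simpa using this
  have hdet : (0:ℂ) ≤ ρ.det := by
    exact hpsd.det_nonneg
  have hdet2 : (0:ℂ) ≤ ρ 0 0 * ρ 1 1 - ρ 0 1 * ρ 1 0 := by
    rwa [Matrix.det_fin_two] at hdet
  have hdetre : 0 ≤ (ρ 0 0).re * (ρ 1 1).re - Complex.normSq (ρ 1 0) := by
    have h := (Complex.le_def.mp hdet2).1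
    rw [← h01] at h
    simp [Complex.sub_re, Complex.mul_re, h00im, h11im] at h
    rw [Complex.normSq_apply]
    nlinarith [h]
  refine ⟨![2 * (ρ 1 0).re, 2 * (ρ 1 0).im, (ρ 0 0).re - (ρ 1 1).re], ?_, ?_⟩
  · ext i j
    fin_cases i <;> fin_cases j
    · apply Complex.ext <;> simp [blochState] <;> linarith
    · apply Complex.ext <;> simp [blochState, ← h01]
    · apply Complex.ext <;> simp [blochState]
    · apply Complex.ext <;> simp [blochState] <;> linarith
  · have hns : Complex.normSq (ρ 1 0) = (ρ 1 0).re^2 + (ρ 1 0).im^2 := by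
      rw [Complex.normSq_apply]; ring
    simp only [Matrix.cons_val_zero, Matrix.cons_val_one, Matrix.head_cons,
      Matrix.cons_val_two, Matrix.tail_cons]
    nlinarith [hdetre]
/-- For a one-qubit Davies channel acting on Bloch vectors as
`(x,y,z) ↦ (η₁x, η₁y, η₃z + κ₃)`, with `η₁² > η₃² ≥ 0`, `κ₃ ≥ 0` (and the
complete-positivity constraint `κ₃η₃ ≤ η₁² − η₃²`), the maximal operator
2-norm of the output over all density matrices equals
`M_Φ = ½(1 + √(η₁² + κ₃²η₁²/(η₁² − η₃²)))`. -/
theorem davies_maximal_output_two_norm (η₁ η₃ κ₃ : ℝ)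
    (hη : η₃ ^ 2 < η₁ ^ 2) (hη₃ : 0 ≤ η₃) (hκ : 0 ≤ κ₃)
    (hcp : κ₃ * η₃ ≤ η₁ ^ 2 - η₃ ^ 2)
    (Φ : Matrix (Fin 2) (Fin 2) ℂ → Matrix (Fin 2) (Fin 2) ℂ)
    (hΦ : ∀ x : Fin 3 → ℝ,
      Φ (blochState x) = blochState ![η₁ * x 0, η₁ * x 1, η₃ * x 2 + κ₃]) :
    IsGreatest
      {v : ℝ | ∃ ρ : Matrix (Fin 2) (Fin 2) ℂ, ρ.PosSemidef ∧ ρ.trace = 1 ∧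
        v = ‖Matrix.toEuclideanCLM (𝕜 := ℂ) (Φ ρ)‖}
      (1 / 2 * (1 + Real.sqrt (η₁ ^ 2 + κ₃ ^ 2 * η₁ ^ 2 / (η₁ ^ 2 - η₃ ^ 2)))) := by
  have hD : 0 < η₁ ^ 2 - η₃ ^ 2 := by linarith
  obtain ⟨z, hzdef⟩ : ∃ z : ℝ, z = η₃ * κ₃ / (η₁ ^ 2 - η₃ ^ 2) := ⟨_, rfl⟩
  have hz0 : 0 ≤ z := by rw [hzdef]; positivity
  have hz1 : z ≤ 1 := by
    rw [hzdef, div_le_one hD]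
    nlinarith
  have hz2 : z ^ 2 ≤ 1 := by nlinarith
  have hsq : Real.sqrt (1 - z^2) ^ 2 = 1 - z^2 := Real.sq_sqrt (by nlinarith)
  constructor
  · -- membership: the optimal state
    refine ⟨blochState ![Real.sqrt (1-z^2), 0, z], bloch_psd z hz2, bloch_trace _, ?_⟩
    rw [hΦ, bloch_norm]
    have e0 : (![η₁ * ![Real.sqrt (1-z^2), 0, z] 0, η₁ * ![Real.sqrt (1-z^2), 0, z] 1,
        η₃ * ![Real.sqrt (1-z^2), 0, z] 2 + κ₃] : Fin 3 → ℝ) 0 = η₁ * Real.sqrt (1-z^2) := by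
      simp
    have e1 : (![η₁ * ![Real.sqrt (1-z^2), 0, z] 0, η₁ * ![Real.sqrt (1-z^2), 0, z] 1,
        η₃ * ![Real.sqrt (1-z^2), 0, z] 2 + κ₃] : Fin 3 → ℝ) 1 = 0 := by
      simp
    have e2 : (![η₁ * ![Real.sqrt (1-z^2), 0, z] 0, η₁ * ![Real.sqrt (1-z^2), 0, z] 1,
        η₃ * ![Real.sqrt (1-z^2), 0, z] 2 + κ₃] : Fin 3 → ℝ) 2 = η₃ * z + κ₃ := by
      simp
    rw [e0, e1, e2]
    have hkey : (η₁ * Real.sqrt (1-z^2))^2 + 0^2 + (η₃ * z + κ₃)^2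
        = η₁ ^ 2 + κ₃ ^ 2 * η₁ ^ 2 / (η₁ ^ 2 - η₃ ^ 2) := by
      rw [mul_pow, hsq, hzdef]
      field_simp
      ring
    rw [hkey]
  · -- upper bound
    rintro w ⟨ρ, hpsd, htr, rfl⟩
    obtain ⟨x, rfl, hx⟩ := bloch_repr hpsd htr
    rw [hΦ, bloch_norm]
    have e0 : (![η₁ * x 0, η₁ * x 1, η₃ * x 2 + κ₃] : Fin 3 → ℝ) 0 = η₁ * x 0 := by simp
    have e1 : (![η₁ * x 0, η₁ * x 1, η₃ * x 2 + κ₃] : Fin 3 → ℝ) 1 = η₁ * x 1 := by simp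
    have e2 : (![η₁ * x 0, η₁ * x 1, η₃ * x 2 + κ₃] : Fin 3 → ℝ) 2 = η₃ * x 2 + κ₃ := by simp
    rw [e0, e1, e2]
    have hxd : 0 ≤ (1 - (x 0^2 + x 1^2 + x 2^2)) * (η₁^2 * (η₁ ^ 2 - η₃ ^ 2)) :=
      mul_nonneg (by linarith) (by positivity)
    have hle : (η₁ * x 0)^2 + (η₁ * x 1)^2 + (η₃ * x 2 + κ₃)^2
        ≤ η₁ ^ 2 + κ₃ ^ 2 * η₁ ^ 2 / (η₁ ^ 2 - η₃ ^ 2) := by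
      rw [← sub_le_iff_le_add', le_div_iff₀ hD]
      nlinarith [sq_nonneg ((η₁ ^ 2 - η₃ ^ 2) * x 2 - η₃ * κ₃), hxd]
    have := Real.sqrt_le_sqrt hle
    linarith
end
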